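/- arXiv:1207.0116 — 4 statements merged into one kernel-verified Lean document; each statement's English description precedes it below -/
import Mathlib

section
/- Let d ≥ 2 and 1 ≤ κ < d be coprime integers and set ζ = e^{2πiκ/d}. Let f be a nonzero polynomial in one variable q with real coefficients and positive leading coefficient, all of whose complex roots are either 0 or roots of unity, and suppose f(ζ) ≠ 0. Let arg(f(ζ)) denote the argument of the complex number f(ζ), taken in [0, 2π). Then π_{κ/d}(f) − arg(f(ζ))/π is an even integer. -/
open Polynomial

/-- `argCount t f` is the cardinality of the multiset `Arg_t(f)` of real numbers `λ` with
`0 < λ ≤ 2πt` such that `e^{iλ}` is a (complex) root of the real polynomial `f`, each such `λ`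
counted with the multiplicity of `e^{iλ}` as a root of `f`. -/
noncomputable def argCount (t : ℝ) (f : Polynomial ℝ) : ℕ :=
  ((f.map (algebraMap ℝ ℂ)).roots.map fun ξ =>
    Nat.card {l : ℝ // 0 < l ∧ l ≤ 2 * Real.pi * t ∧ Complex.exp ((l : ℂ) * Complex.I) = ξ}).sum

/-- `piFn κ d f` is the rational number
`π_{κ/d}(f) = (a(f) + A(f))·(κ/d) + |Arg_{κ/d}(f)| + (1/2)·(multiplicity of 1 as a root of f)`,
where `a(f)` is the multiplicity of `0` as a root of `f` and `A(f)` is the degree of `f`. -/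
noncomputable def piFn (κ d : ℕ) (f : Polynomial ℝ) : ℚ :=
  ((rootMultiplicity 0 f : ℚ) + (f.natDegree : ℚ)) * (κ : ℚ) / (d : ℚ)
    + (argCount ((κ : ℝ) / (d : ℝ)) f : ℚ) + (rootMultiplicity 1 f : ℚ) / 2

/-- All complex roots of `f` are either `0` or roots of unity. -/
def RootsZeroOrUnity (f : Polynomial ℝ) : Prop :=
  ∀ z ∈ (f.map (algebraMap ℝ ℂ)).roots, z = 0 ∨ ∃ n : ℕ, 0 < n ∧ z ^ n = 1

section AuxPiFn


noncomputable def myMu (ξ : ℂ) : ℝ :=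
  if 0 < ξ.arg then ξ.arg else ξ.arg + 2 * Real.pi

lemma myMu_pos (ξ : ℂ) : 0 < myMu ξ := by
  unfold myMu
  split
  · assumption
  · nlinarith [Complex.neg_pi_lt_arg ξ, Real.pi_pos]

lemma myMu_le (ξ : ℂ) : myMu ξ ≤ 2 * Real.pi := by
  unfold myMu
  split
  · nlinarith [Complex.arg_le_pi ξ, Real.pi_pos]
  · nlinarith [Complex.arg_le_pi ξ]

lemma exp_myMu {ξ : ℂ} (hξ : ‖ξ‖ = 1) :
    Complex.exp ((myMu ξ : ℂ) * Complex.I) = ξ := by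
  have hbase : Complex.exp ((ξ.arg : ℂ) * Complex.I) = ξ := by
    have := Complex.norm_mul_exp_arg_mul_I ξ
    rwa [hξ, Complex.ofReal_one, one_mul] at this
  unfold myMu
  split
  · exact hbase
  · push_cast
    rw [add_mul, Complex.exp_add, hbase]
    simp [Complex.exp_two_pi_mul_I]

lemma exp_I_eq_iff {a b : ℝ} :
    Complex.exp ((a : ℂ) * Complex.I) = Complex.exp ((b : ℂ) * Complex.I) ↔
      ∃ n : ℤ, a = b + n * (2 * Real.pi) := by
  rw [Complex.exp_eq_exp_iff_exists_int]
  constructor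
  · rintro ⟨n, h⟩
    refine ⟨n, ?_⟩
    have h2 : (a : ℂ) * Complex.I = ((b + n * (2 * Real.pi) : ℝ) : ℂ) * Complex.I := by
      rw [h]; push_cast; ring
    have h3 := mul_right_cancel₀ Complex.I_ne_zero h2
    exact_mod_cast h3
  · rintro ⟨n, rfl⟩
    exact ⟨n, by push_cast; ring⟩



noncomputable def myCount (τ : ℝ) (ξ : ℂ) : ℕ :=
  Nat.card {l : ℝ // 0 < l ∧ l ≤ τ ∧ Complex.exp ((l : ℂ) * Complex.I) = ξ}

lemma myCount_zero (τ : ℝ) : myCount τ 0 = 0 := by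
  have : IsEmpty {l : ℝ // 0 < l ∧ l ≤ τ ∧ Complex.exp ((l : ℂ) * Complex.I) = 0} := by
    refine ⟨fun x => ?_⟩
    exact Complex.exp_ne_zero _ x.2.2.2
  exact Nat.card_of_isEmpty

lemma myCount_eq {τ : ℝ} (hτ0 : 0 < τ) (hτ2 : τ < 2 * Real.pi) {ξ : ℂ}
    (hξ : ‖ξ‖ = 1) :
    myCount τ ξ = if myMu ξ ≤ τ then 1 else 0 := by
  have key : ∀ l : ℝ, 0 < l → l ≤ τ → Complex.exp ((l : ℂ) * Complex.I) = ξ → l = myMu ξ := by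
    intro l hl0 hlτ hle
    rw [← exp_myMu hξ, exp_I_eq_iff] at hle
    obtain ⟨n, hn⟩ := hle
    have hμ0 := myMu_pos ξ
    have hμ2 := myMu_le ξ
    have hpi := Real.pi_pos
    have hn0 : n = 0 := by
      rcases lt_trichotomy n 0 with h | h | h
      · have : (n : ℝ) ≤ -1 := by exact_mod_cast Int.le_of_lt_add_one (by omega : n < -1 + 1)
        nlinarith
      · exact h
      · have : (1 : ℝ) ≤ (n : ℝ) := by exact_mod_cast h
        nlinarith
    rw [hn0] at hn
    simpa using hn
  split
  · next hle =>
    rw [myCount, Nat.card_eq_one_iff_unique]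
    constructor
    · exact ⟨fun x y => Subtype.ext (by rw [key x x.2.1 x.2.2.1 x.2.2.2, key y y.2.1 y.2.2.1 y.2.2.2])⟩
    · exact ⟨⟨myMu ξ, myMu_pos ξ, hle, exp_myMu hξ⟩⟩
  · next hle =>
    have : IsEmpty {l : ℝ // 0 < l ∧ l ≤ τ ∧ Complex.exp ((l : ℂ) * Complex.I) = ξ} := by
      refine ⟨fun x => hle ?_⟩
      rw [← key x x.2.1 x.2.2.1 x.2.2.2]
      exact x.2.2.1
    exact Nat.card_of_isEmpty



noncomputable def myBeta (τ : ℝ) (ξ : ℂ) : ℝ :=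
  if ξ = 0 then τ
  else (τ + myMu ξ) / 2 + (if myMu ξ < τ then Real.pi / 2 else -(Real.pi / 2))

noncomputable def myH (ξ : ℂ) : ℝ :=
  if ξ = 0 ∨ ξ = 1 then 0 else 1 / 2 - myMu ξ / (2 * Real.pi)

lemma eq_one_of_arg_eq_zero {ξ : ℂ} (hξ : ‖ξ‖ = 1) (h : ξ.arg = 0) : ξ = 1 := by
  have := Complex.norm_mul_exp_arg_mul_I ξ
  rw [hξ, h] at this
  simpa using this.symm

lemma myMu_conj {ξ : ℂ} (hξ : ‖ξ‖ = 1) (h1 : ξ ≠ 1) :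
    myMu ((starRingEnd ℂ) ξ) + myMu ξ = 2 * Real.pi := by
  have harg := Complex.arg_conj ξ
  have hne : ξ.arg ≠ 0 := fun h => h1 (eq_one_of_arg_eq_zero hξ h)
  unfold myMu
  rcases eq_or_ne ξ.arg Real.pi with hpi | hpi
  · rw [harg, hpi, if_pos rfl]
    simp only [if_pos Real.pi_pos]
    ring
  · rw [harg, if_neg hpi]
    rcases lt_trichotomy ξ.arg 0 with h | h | h
    · rw [if_neg (by linarith : ¬ 0 < ξ.arg), if_pos (by linarith : 0 < -ξ.arg)]
      ring
    · exact absurd h hne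
    · rw [if_pos h, if_neg (by linarith : ¬ 0 < -ξ.arg)]
      ring

lemma myH_add_conj {ξ : ℂ} (hξ : ξ = 0 ∨ ‖ξ‖ = 1) :
    myH ((starRingEnd ℂ) ξ) + myH ξ = 0 := by
  rcases hξ with rfl | hξ
  · simp [myH]
  rcases eq_or_ne ξ 1 with rfl | h1
  · simp [myH]
  have hξ0 : ξ ≠ 0 := by intro h; rw [h] at hξ; simp at hξ
  have hc0 : (starRingEnd ℂ) ξ ≠ 0 := by simpa using hξ0
  have hc1 : (starRingEnd ℂ) ξ ≠ 1 := by
    intro h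
    apply h1
    have := congrArg (starRingEnd ℂ) h
    simpa using this
  rw [myH, myH, if_neg (by tauto), if_neg (by tauto)]
  have := myMu_conj hξ h1
  have hpi := Real.pi_pos
  field_simp
  linarith




lemma exp_pi_div_two : Complex.exp (((Real.pi / 2 : ℝ) : ℂ) * Complex.I) = Complex.I := by
  rw [Complex.exp_mul_I, ← Complex.ofReal_cos, ← Complex.ofReal_sin]
  simp [Real.cos_pi_div_two, Real.sin_pi_div_two]

lemma exp_neg_pi_div_two : Complex.exp ((((-(Real.pi / 2)) : ℝ) : ℂ) * Complex.I) = -Complex.I := by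
  rw [Complex.exp_mul_I, ← Complex.ofReal_cos, ← Complex.ofReal_sin]
  simp [Real.cos_pi_div_two, Real.sin_pi_div_two]

lemma factor_lemma {τ : ℝ} (hτ0 : 0 < τ) (hτ2 : τ < 2 * Real.pi) {ζ ξ : ℂ}
    (hζ : ζ = Complex.exp ((τ : ℂ) * Complex.I))
    (hξ : ξ = 0 ∨ ‖ξ‖ = 1) (hne : ξ ≠ ζ) :
    ∃ r : ℝ, 0 < r ∧ ζ - ξ = (r : ℂ) * Complex.exp ((myBeta τ ξ : ℂ) * Complex.I) := by
  rcases hξ with rfl | hξ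
  · exact ⟨1, one_pos, by simp [myBeta, hζ]⟩
  · set μ := myMu ξ with hμdef
    have hμ0 : 0 < μ := myMu_pos ξ
    have hμ2 : μ ≤ 2 * Real.pi := myMu_le ξ
    have hexpμ : Complex.exp ((μ : ℂ) * Complex.I) = ξ := exp_myMu hξ
    have hμτ : μ ≠ τ := by
      intro h
      apply hne
      rw [← hexpμ, hζ, h]
    have hkey : ζ - ξ = Complex.exp ((((τ + μ) / 2 : ℝ) : ℂ) * Complex.I) *
        (2 * Real.sin ((τ - μ) / 2) * Complex.I) := by
      have e1 : ζ = Complex.exp ((((τ + μ) / 2 : ℝ) : ℂ) * Complex.I) *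
          Complex.exp ((((τ - μ) / 2 : ℝ) : ℂ) * Complex.I) := by
        rw [hζ, ← Complex.exp_add]
        congr 1
        push_cast
        ring
      have e2 : ξ = Complex.exp ((((τ + μ) / 2 : ℝ) : ℂ) * Complex.I) *
          Complex.exp (((-((τ - μ) / 2) : ℝ) : ℂ) * Complex.I) := by
        rw [← hexpμ, ← Complex.exp_add]
        congr 1
        push_cast
        ring
      rw [e1, e2, ← mul_sub]
      congr 1
      rw [Complex.exp_mul_I, Complex.exp_mul_I, Complex.ofReal_neg, Complex.cos_neg,
        Complex.sin_neg, ← Complex.ofReal_sin]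
      ring
    have hsb : -Real.pi < (τ - μ) / 2 ∧ (τ - μ) / 2 < Real.pi := ⟨by nlinarith, by nlinarith⟩
    have hβ : myBeta τ ξ = (τ + μ) / 2 + (if μ < τ then Real.pi / 2 else -(Real.pi / 2)) := by
      rw [myBeta, if_neg]
      intro h
      rw [h] at hξ
      simp at hξ
    rcases lt_or_gt_of_ne hμτ with hlt | hgt
    · have hs0 : 0 < (τ - μ) / 2 := by linarith
      have hsin : 0 < Real.sin ((τ - μ) / 2) := Real.sin_pos_of_pos_of_lt_pi hs0 hsb.2
      refine ⟨2 * Real.sin ((τ - μ) / 2), by linarith, ?_⟩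
      rw [hkey, hβ, if_pos hlt, Complex.ofReal_add, add_mul, Complex.exp_add, exp_pi_div_two]
      push_cast
      ring
    · have hs0 : (τ - μ) / 2 < 0 := by linarith
      have hsin : Real.sin ((τ - μ) / 2) < 0 := by
        have := Real.sin_pos_of_pos_of_lt_pi (x := -((τ - μ) / 2)) (by linarith) (by linarith)
        rw [Real.sin_neg] at this
        linarith
      refine ⟨-(2 * Real.sin ((τ - μ) / 2)), by linarith, ?_⟩
      rw [hkey, hβ, if_neg (by linarith : ¬ μ < τ), Complex.ofReal_add, add_mul,
        Complex.exp_add, exp_neg_pi_div_two]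
      push_cast
      ring

lemma prod_lemma {τ : ℝ} (hτ0 : 0 < τ) (hτ2 : τ < 2 * Real.pi) {ζ : ℂ}
    (hζ : ζ = Complex.exp ((τ : ℂ) * Complex.I)) (R : Multiset ℂ)
    (hR : ∀ ξ ∈ R, (ξ = 0 ∨ ‖ξ‖ = 1) ∧ ξ ≠ ζ) :
    ∃ r : ℝ, 0 < r ∧ (R.map (fun ξ => ζ - ξ)).prod =
      (r : ℂ) * Complex.exp (((R.map (myBeta τ)).sum : ℂ) * Complex.I) := by
  induction R using Multiset.induction_on with
  | empty => exact ⟨1, one_pos, by simp⟩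
  | cons ξ R ih =>
    obtain ⟨r, hr, hprod⟩ := ih (fun x hx => hR x (Multiset.mem_cons_of_mem hx))
    obtain ⟨s, hs, hfac⟩ := factor_lemma hτ0 hτ2 hζ (hR ξ (Multiset.mem_cons_self ξ R)).1
      (hR ξ (Multiset.mem_cons_self ξ R)).2
    refine ⟨s * r, mul_pos hs hr, ?_⟩
    rw [Multiset.map_cons, Multiset.prod_cons, Multiset.map_cons, Multiset.sum_cons, hprod, hfac]
    push_cast
    rw [add_mul, Complex.exp_add]
    ring






lemma sum_ind (a : ℂ) (s : Multiset ℂ) :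
    (s.map fun x => if x = a then (1 : ℝ) else 0).sum = s.count a := by
  induction s using Multiset.induction_on with
  | empty => simp
  | cons b s ih =>
    rw [Multiset.map_cons, Multiset.sum_cons, ih, Multiset.count_cons]
    rcases eq_or_ne b a with h | h
    · simp [h, add_comm]
    · simp [h, Ne.symm h]

lemma sum_h_eq_zero (R : Multiset ℂ) (hconj : R.map (starRingEnd ℂ) = R)
    (hmem : ∀ ξ ∈ R, ξ = 0 ∨ ‖ξ‖ = 1) : (R.map myH).sum = 0 := by
  have e1 : (R.map myH).sum = (R.map (fun ξ => myH ((starRingEnd ℂ) ξ))).sum := by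
    conv_lhs => rw [← hconj]
    rw [Multiset.map_map]
    rfl
  have h2 : (R.map myH).sum + (R.map myH).sum = 0 := by
    calc (R.map myH).sum + (R.map myH).sum
        = (R.map (fun ξ => myH ((starRingEnd ℂ) ξ))).sum + (R.map myH).sum := by rw [e1]
      _ = (R.map (fun ξ => myH ((starRingEnd ℂ) ξ) + myH ξ)).sum := by
            rw [Multiset.sum_map_add]
      _ = (R.map (fun _ => (0 : ℝ))).sum := by
            rw [Multiset.map_congr rfl (fun ξ hξ => myH_add_conj (hmem ξ hξ))]
      _ = 0 := by simp
  linarith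

lemma pointwise_id {τ t : ℝ} (hτ0 : 0 < τ) (hτ2 : τ < 2 * Real.pi) (hτ : τ = 2 * Real.pi * t)
    {ξ : ℂ} (hξ : ξ = 0 ∨ ‖ξ‖ = 1)
    (hne : ξ ≠ Complex.exp ((τ : ℂ) * Complex.I)) :
    Real.pi * (((if ξ = 0 then (1 : ℝ) else 0) + 1) * t + (myCount τ ξ : ℝ)
      + (if ξ = 1 then (1 : ℝ) else 0) / 2) = myBeta τ ξ + Real.pi * myH ξ := by
  have hπ := Real.pi_pos
  rcases hξ with rfl | hξ
  · rw [myCount_zero, myBeta, myH]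
    rw [if_pos rfl, if_pos (Or.inl rfl : (0 : ℂ) = 0 ∨ (0 : ℂ) = 1),
      if_pos rfl, if_neg (by norm_num : ¬ (0 : ℂ) = 1), hτ]
    push_cast
    ring
  · have hξ0 : ξ ≠ 0 := fun h => by rw [h] at hξ; simp at hξ
    have hμτ : myMu ξ ≠ τ := by
      intro h
      exact hne (by rw [← exp_myMu hξ, h])
    rw [myCount_eq hτ0 hτ2 hξ]
    rcases eq_or_ne ξ 1 with rfl | h1
    · have hμ : myMu 1 = 2 * Real.pi := by
        rw [myMu, Complex.arg_one, if_neg (lt_irrefl 0)]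
        ring
      have hc : ¬ myMu 1 ≤ τ := by rw [hμ]; linarith
      have hc' : ¬ myMu 1 < τ := by rw [hμ]; linarith
      rw [myBeta, myH]
      simp only [if_neg hc, if_neg hc', if_neg hξ0, eq_self_iff_true, or_true, if_true]
      rw [hμ, hτ]
      push_cast
      ring
    · have hor : ¬ (ξ = 0 ∨ ξ = 1) := by
        rintro (h | h)
        exacts [hξ0 h, h1 h]
      rw [myBeta, myH]
      rcases lt_or_gt_of_ne hμτ with hlt | hgt
      · simp only [if_pos hlt.le, if_pos hlt, if_neg hξ0, if_neg h1, if_neg hor]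
        rw [hτ]
        push_cast
        field_simp
        ring
      · have hc : ¬ myMu ξ ≤ τ := by linarith
        have hc' : ¬ myMu ξ < τ := by linarith
        simp only [if_neg hc, if_neg hc', if_neg hξ0, if_neg h1, if_neg hor]
        rw [hτ]
        push_cast
        field_simp
        ring

lemma sum_combine {τ t : ℝ} (R : Multiset ℂ)
    (hmem : ∀ ξ ∈ R, Real.pi * (((if ξ = 0 then (1 : ℝ) else 0) + 1) * t + (myCount τ ξ : ℝ)
      + (if ξ = 1 then (1 : ℝ) else 0) / 2) = myBeta τ ξ + Real.pi * myH ξ) :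
    Real.pi * (((R.map fun ξ => if ξ = 0 then (1 : ℝ) else 0).sum
        + (R.map fun _ => (1 : ℝ)).sum) * t
      + (R.map fun ξ => (myCount τ ξ : ℝ)).sum
      + (R.map fun ξ => if ξ = 1 then (1 : ℝ) else 0).sum / 2)
    = (R.map (myBeta τ)).sum + Real.pi * (R.map myH).sum := by
  induction R using Multiset.induction_on with
  | empty => simp
  | cons ξ R ih =>
    have hhead := hmem ξ (Multiset.mem_cons_self ξ R)
    have htail := ih (fun x hx => hmem x (Multiset.mem_cons_of_mem hx))
    simp only [Multiset.map_cons, Multiset.sum_cons]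
    nlinarith [hhead, htail]

end AuxPiFn

/-- For `f` with positive leading coefficient, roots among `0` and roots of unity, and
`f(ζ) ≠ 0` where `ζ = e^{2πiκ/d}`: the quantity `π_{κ/d}(f) − arg(f(ζ))/π` is an even integer,
where `arg(f(ζ))` is the argument of `f(ζ)` taken in `[0, 2π)` (characterized by
`0 ≤ θ < 2π` and `f(ζ) = |f(ζ)|·e^{iθ}`). -/

theorem piFn_eq_arg_mod_two (κ d : ℕ) (hd : 2 ≤ d) (hκ1 : 1 ≤ κ) (hκd : κ < d)
    (hcop : Nat.Coprime κ d) (f : Polynomial ℝ) (hf : f ≠ 0)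
    (hlead : 0 < f.leadingCoeff) (hroots : RootsZeroOrUnity f)
    (ζ : ℂ) (hζ : ζ = Complex.exp (2 * (Real.pi : ℂ) * (κ : ℂ) / (d : ℂ) * Complex.I))
    (hfζ : Polynomial.aeval ζ f ≠ 0)
    (θ : ℝ) (hθ0 : 0 ≤ θ) (hθ2 : θ < 2 * Real.pi)
    (hθ : Polynomial.aeval ζ f =
      (‖Polynomial.aeval ζ f‖ : ℂ) * Complex.exp ((θ : ℂ) * Complex.I)) :
    ∃ m : ℤ, (piFn κ d f : ℝ) - θ / Real.pi = 2 * (m : ℝ) := by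
  have hπ := Real.pi_pos
  have hdR : (0 : ℝ) < (d : ℝ) := by exact_mod_cast (by omega : 0 < d)
  set t : ℝ := (κ : ℝ) / (d : ℝ) with ht
  have ht0 : 0 < t := div_pos (by exact_mod_cast hκ1) hdR
  have ht1 : t < 1 := (div_lt_one hdR).mpr (by exact_mod_cast hκd)
  set τ : ℝ := 2 * Real.pi * t with hτ
  have hτ0 : 0 < τ := by positivity
  have hτ2 : τ < 2 * Real.pi := by nlinarith
  have hζτ : ζ = Complex.exp ((τ : ℂ) * Complex.I) := by
    rw [hζ]
    congr 1
    rw [hτ, ht]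
    push_cast
    ring
  set F := f.map (algebraMap ℝ ℂ) with hF
  have hsp : F.Splits := IsAlgClosed.splits F
  have hFne : F ≠ 0 := (Polynomial.map_ne_zero_iff (algebraMap ℝ ℂ).injective).mpr hf
  set R := F.roots with hRdef
  have heval : Polynomial.aeval ζ f = F.eval ζ := (eval_map_algebraMap (B := ℂ) f ζ).symm
  have hevalF : F.eval ζ = ((f.leadingCoeff : ℂ)) * (R.map fun a => ζ - a).prod := by
    conv_lhs => rw [hsp.eq_prod_roots, hF, leadingCoeff_map]
    rw [eval_mul, eval_C, eval_multiset_prod, Multiset.map_map]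
    simp only [Function.comp, eval_sub, eval_X, eval_C]
    rfl
  have hRmem : ∀ ξ ∈ R, (ξ = 0 ∨ ‖ξ‖ = 1) ∧ ξ ≠ ζ := by
    intro ξ hξ
    constructor
    · rcases hroots ξ hξ with h | ⟨n, hn, hpow⟩
      · exact Or.inl h
      · refine Or.inr ?_
        have habs : ‖ξ‖ ^ n = 1 := by
          rw [← norm_pow, hpow, norm_one]
        have h0 : 0 ≤ ‖ξ‖ := norm_nonneg ξ
        rcases lt_trichotomy ‖ξ‖ 1 with h | h | h
        · exfalso
          have := pow_lt_one₀ h0 h (by omega : n ≠ 0)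
          rw [habs] at this
          exact lt_irrefl 1 this
        · exact h
        · exfalso
          have := one_lt_pow₀ h (by omega : n ≠ 0)
          rw [habs] at this
          exact lt_irrefl 1 this
    · intro hξζ
      apply hfζ
      rw [heval]
      exact (Polynomial.mem_roots hFne).mp (hξζ ▸ hξ)
  obtain ⟨r, hr, hprodR⟩ := prod_lemma hτ0 hτ2 hζτ R hRmem
  have hc := hlead
  have hval : Polynomial.aeval ζ f = ((f.leadingCoeff * r : ℝ) : ℂ) *
      Complex.exp ((((R.map (myBeta τ)).sum : ℝ) : ℂ) * Complex.I) := by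
    rw [heval, hevalF, hprodR]
    push_cast
    ring
  have hcr : (0 : ℝ) < f.leadingCoeff * r := mul_pos hc hr
  have habs : ‖Polynomial.aeval ζ f‖ = f.leadingCoeff * r := by
    rw [hval, norm_mul, Complex.norm_exp_ofReal_mul_I, mul_one, Complex.norm_real,
      Real.norm_of_nonneg hcr.le]
  have hexp : Complex.exp ((((R.map (myBeta τ)).sum : ℝ) : ℂ) * Complex.I)
      = Complex.exp ((θ : ℂ) * Complex.I) := by
    have h2 : ((f.leadingCoeff * r : ℝ) : ℂ) *
        Complex.exp ((((R.map (myBeta τ)).sum : ℝ) : ℂ) * Complex.I)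
        = ((f.leadingCoeff * r : ℝ) : ℂ) * Complex.exp ((θ : ℂ) * Complex.I) := by
      rw [← hval, hθ, habs]
    exact mul_left_cancel₀ (by exact_mod_cast ne_of_gt hcr) h2
  obtain ⟨n, hn⟩ := exp_I_eq_iff.mp hexp
  -- counting identities
  have hcount0 : (rootMultiplicity 0 f : ℝ)
      = ((R.map fun ξ => if ξ = 0 then (1 : ℝ) else 0)).sum := by
    rw [sum_ind]
    norm_cast
    rw [hRdef, Polynomial.count_roots, hF]
    have := eq_rootMultiplicity_map (p := f) (algebraMap ℝ ℂ).injective 0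
    rw [map_zero] at this
    omega
  have hcount1 : (rootMultiplicity 1 f : ℝ)
      = ((R.map fun ξ => if ξ = 1 then (1 : ℝ) else 0)).sum := by
    rw [sum_ind]
    norm_cast
    rw [hRdef, Polynomial.count_roots, hF]
    have := eq_rootMultiplicity_map (p := f) (algebraMap ℝ ℂ).injective 1
    rw [map_one] at this
    omega
  have hdeg : (f.natDegree : ℝ) = ((R.map fun _ => (1 : ℝ))).sum := by
    rw [Multiset.map_const', Multiset.sum_replicate, nsmul_eq_mul, mul_one]
    norm_cast
    rw [← natDegree_map (algebraMap ℝ ℂ)]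
    exact hsp.natDegree_eq_card_roots
  have hargc : ((argCount t f : ℕ) : ℝ) = (R.map fun ξ => (myCount τ ξ : ℝ)).sum := by
    rw [argCount, Nat.cast_multiset_sum, Multiset.map_map]
    rfl
  -- conjugation invariance
  have hconj : R.map (starRingEnd ℂ) = R := by
    have hFc : F.map (starRingEnd ℂ) = F := by
      rw [hF, Polynomial.map_map]
      congr 1
      ext x
      simp [Complex.conj_ofReal]
    have hspF : F.Splits := IsAlgClosed.splits F
    have := hspF.roots_map (starRingEnd ℂ)
    rw [hFc] at this
    rw [hRdef, ← this]
  have hsumH : (R.map myH).sum = 0 := sum_h_eq_zero R hconj (fun ξ hξ => (hRmem ξ hξ).1)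
  -- assemble
  have hpiFn : ((piFn κ d f : ℚ) : ℝ)
      = ((rootMultiplicity 0 f : ℝ) + (f.natDegree : ℝ)) * t
        + ((argCount t f : ℕ) : ℝ) + (rootMultiplicity 1 f : ℝ) / 2 := by
    rw [piFn, ht]
    push_cast
    ring
  have hsum := sum_combine (τ := τ) (t := t) R
    (fun ξ hξ => pointwise_id hτ0 hτ2 hτ ((hRmem ξ hξ).1) (hζτ ▸ (hRmem ξ hξ).2))
  have hmain : Real.pi * ((piFn κ d f : ℚ) : ℝ) = (R.map (myBeta τ)).sum := by
    rw [hpiFn, hcount0, hcount1, hdeg, hargc, hsum, hsumH]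
    ring
  refine ⟨n, ?_⟩
  have hre : ((piFn κ d f : ℚ) : ℝ) = (θ + n * (2 * Real.pi)) / Real.pi := by
    rw [← hn, ← hmain]
    field_simp
  rw [hre]
  field_simp
  ring
end

section
/- Let κ and d be coprime positive integers and set ζ = e^{2πiκ/d}. Let f and g be nonzero polynomials in one variable q with real coefficients and positive leading coefficients, all of whose complex roots are either 0 or roots of unity, and suppose that f(ζ) ≠ 0, g(ζ) ≠ 0, and that the complex number f(ζ)/g(ζ) is real. Then π_{κ/d}(f) − π_{κ/d}(g) is an integer; it is even if f(ζ)/g(ζ) > 0 and odd if f(ζ)/g(ζ) < 0. -/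
open Polynomial

open Complex

local notation "π" => Real.pi

/-- number of l in (0, 2πt] with e^{il} = ξ -/
noncomputable def nfun (t : ℝ) (ξ : ℂ) : ℕ :=
  Nat.card {l : ℝ // 0 < l ∧ l ≤ 2 * Real.pi * t ∧ Complex.exp ((l : ℂ) * Complex.I) = ξ}

/-- positive-multiple-of-phase predicate -/
def Ph (q : ℝ) (w : ℂ) : Prop :=
  ∃ ρ : ℝ, 0 < ρ ∧ w = (ρ : ℂ) * Complex.exp ((Real.pi * q : ℝ) * Complex.I)

lemma Ph.mul {q q' : ℝ} {w w' : ℂ} (h : Ph q w) (h' : Ph q' w') : Ph (q + q') (w * w') := by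
  obtain ⟨ρ, hρ, rfl⟩ := h
  obtain ⟨ρ', hρ', rfl⟩ := h'
  refine ⟨ρ * ρ', mul_pos hρ hρ', ?_⟩
  have : ((Real.pi * (q + q') : ℝ) : ℂ) * Complex.I
      = (Real.pi * q : ℝ) * Complex.I + (Real.pi * q' : ℝ) * Complex.I := by
    push_cast; ring
  rw [this, Complex.exp_add]
  push_cast
  ring

lemma Ph.congr {q q' : ℝ} {w : ℂ} (h : Ph q w) (hq : q = q') : Ph q' w := hq ▸ h

lemma two_pi_pos : (0:ℝ) < 2 * π := by positivity

lemma nfun_zero (t : ℝ) : nfun t 0 = 0 := by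
  rw [nfun, Nat.card_eq_zero]
  left
  constructor
  rintro ⟨l, _, _, h⟩
  exact Complex.exp_ne_zero _ h

lemma nfun_eq (t μ : ℝ) (ht : 0 < t) (hμ0 : 0 < μ) (hμ2 : μ ≤ 2 * π) :
    (nfun t (Complex.exp ((μ : ℂ) * Complex.I)) : ℤ) = ⌊t - μ / (2 * π)⌋ + 1 := by
  have hpi := Real.pi_pos
  set u : ℝ := t - μ / (2 * π) with hu
  have hu1 : (-1 : ℝ) < u := by
    have : μ / (2 * π) ≤ 1 := by
      rw [div_le_one two_pi_pos]; exact hμ2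
    simp only [hu]; linarith
  have hfl : (-1 : ℤ) ≤ ⌊u⌋ := by
    rw [Int.le_floor]; push_cast; linarith
  set n₀ : ℕ := (⌊u⌋ + 1).toNat with hn₀
  have hinj : Function.Injective fun k : ℕ => μ + 2 * π * (k : ℝ) := by
    intro a b hab
    simp only at hab
    have : (a : ℝ) = (b : ℝ) := by
      have h2 : 2 * π * (a : ℝ) = 2 * π * b := by linarith
      exact mul_left_cancel₀ (ne_of_gt two_pi_pos) h2
    exact_mod_cast this
  have hset : {l : ℝ | 0 < l ∧ l ≤ 2 * π * t ∧ Complex.exp ((l : ℂ) * Complex.I)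
      = Complex.exp ((μ : ℂ) * Complex.I)}
      = ↑((Finset.range n₀).image fun k : ℕ => μ + 2 * π * (k : ℝ)) := by
    ext l
    simp only [Set.mem_setOf_eq, Finset.coe_image, Set.mem_image, Finset.mem_coe,
      Finset.mem_range, Finset.coe_range, Set.mem_Iio]
    constructor
    · rintro ⟨hl0, hlT, hexp⟩
      rw [Complex.exp_eq_exp_iff_exists_int] at hexp
      obtain ⟨k, hk⟩ := hexp
      have hk2 : (l : ℂ) * Complex.I = ((μ + 2 * π * (k : ℝ) : ℝ) : ℂ) * Complex.I := by
        rw [hk]; push_cast; ring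
      have hkl : l = μ + 2 * π * (k : ℝ) := by
        exact_mod_cast mul_right_cancel₀ Complex.I_ne_zero hk2
      have hk0 : 0 ≤ k := by
        by_contra hneg
        push_neg at hneg
        have hk1 : k ≤ -1 := by omega
        have : (k : ℝ) ≤ -1 := by exact_mod_cast hk1
        nlinarith
      have hku : (k : ℝ) ≤ u := by
        rw [hu, le_sub_iff_add_le, ← sub_nonneg]
        have : 2 * π * (k : ℝ) ≤ 2 * π * t - μ := by linarith
        have h2 : (k : ℝ) ≤ (2 * π * t - μ) / (2 * π) := by
          rw [le_div_iff₀ two_pi_pos]; linarith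
        have h3 : μ / (2 * π) + (k:ℝ) ≤ t := by
          rw [← sub_nonneg] at h2 ⊢
          have : t - (μ / (2*π) + k) = (2*π*t - μ)/(2*π) - k := by field_simp; ring
          linarith [this ▸ h2]
        linarith
      have hkfl : k ≤ ⌊u⌋ := Int.le_floor.mpr hku
      refine ⟨k.toNat, by omega, ?_⟩
      rw [hkl]
      have hkt : ((k.toNat : ℕ) : ℝ) = ((k : ℤ) : ℝ) := by
        have : (k.toNat : ℤ) = k := by omega
        exact_mod_cast this
      rw [hkt]
    · rintro ⟨k, hk, rfl⟩
      have hkfl : (k : ℤ) ≤ ⌊u⌋ := by omega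
      have hku : (k : ℝ) ≤ u := le_trans (by exact_mod_cast hkfl) (Int.floor_le u)
      refine ⟨by positivity, ?_, ?_⟩
      · have : 2 * π * (k : ℝ) ≤ 2 * π * u := by nlinarith
        have h2 : 2 * π * u = 2 * π * t - μ := by rw [hu]; field_simp
        linarith [h2 ▸ this]
      · push_cast
        rw [add_mul, Complex.exp_add]
        have : ((2:ℂ) * π * k * Complex.I) = (k : ℂ) * (2 * π * Complex.I) := by ring
        have h4 : Complex.exp ((k : ℂ) * (2 * (π:ℝ) * Complex.I)) = 1 := by
          have := Complex.exp_int_mul_two_pi_mul_I (k : ℤ)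
          push_cast at this ⊢
          exact this
        rw [this, h4, mul_one]
  have hcard : nfun t (Complex.exp ((μ : ℂ) * Complex.I)) = n₀ := by
    have h1 : nfun t (Complex.exp ((μ : ℂ) * Complex.I))
        = Nat.card ({l : ℝ | 0 < l ∧ l ≤ 2 * π * t ∧ Complex.exp ((l : ℂ) * Complex.I)
          = Complex.exp ((μ : ℂ) * Complex.I)} : Set ℝ) := rfl
    rw [h1, hset, Nat.card_coe_set_eq, Set.ncard_coe_finset,
      Finset.card_image_of_injective _ hinj, Finset.card_range]
  rw [hcard]
  omega

lemma sin_sign (u : ℝ) (h : ∀ k : ℤ, u ≠ k) :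
    0 < (-1 : ℝ) ^ ⌊u⌋ * Real.sin (π * u) := by
  have hfr : 0 < Int.fract u := by
    rcases lt_or_eq_of_le (Int.fract_nonneg u) with h' | h'
    · exact h'
    · exfalso
      have : u = ⌊u⌋ := by
        have := Int.fract_add_floor u
        rw [← h'] at this
        simpa using this.symm
      exact h ⌊u⌋ this
  have hfr1 : Int.fract u < 1 := Int.fract_lt_one u
  have hsin : Real.sin (π * u) = (-1 : ℝ) ^ ⌊u⌋ * Real.sin (π * Int.fract u) := by
    have : π * u = π * Int.fract u + ⌊u⌋ * π := by
      rw [Int.fract]; ring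
    rw [this, Real.sin_add_int_mul_pi]
  rw [hsin, ← mul_assoc, ← zpow_add₀ (by norm_num : (-1:ℝ) ≠ 0)]
  have : Even (⌊u⌋ + ⌊u⌋) := ⟨⌊u⌋, rfl⟩
  rw [this.neg_one_zpow, one_mul]
  apply Real.sin_pos_of_pos_of_lt_pi
  · positivity
  · nlinarith [Real.pi_pos]

lemma exp_diff (x : ℝ) :
    Complex.exp ((x : ℂ) * Complex.I) - Complex.exp (((-x : ℝ) : ℂ) * Complex.I)
      = 2 * ((Real.sin x : ℝ) : ℂ) * Complex.I := by
  rw [Complex.exp_mul_I, Complex.exp_mul_I]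
  push_cast
  rw [Complex.cos_neg, Complex.sin_neg]
  ring

lemma phase_factor (t μ : ℝ) (ht : 0 < t) (hμ0 : 0 < μ) (hμ2 : μ ≤ 2 * π)
    (hne : Complex.exp ((μ : ℂ) * Complex.I)
      ≠ Complex.exp (((2 * π * t : ℝ) : ℂ) * Complex.I)) :
    Ph (t + μ / (2 * π) + (nfun t (Complex.exp ((μ : ℂ) * Complex.I)) : ℝ) - 1/2)
      (Complex.exp (((2 * π * t : ℝ) : ℂ) * Complex.I) - Complex.exp ((μ : ℂ) * Complex.I)) := by
  have hpi := Real.pi_pos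
  have hpne := Real.pi_ne_zero
  set T : ℝ := 2 * π * t with hT
  set u : ℝ := t - μ / (2 * π) with hu
  set n : ℕ := nfun t (Complex.exp ((μ : ℂ) * Complex.I)) with hn
  have hnval : (n : ℤ) = ⌊u⌋ + 1 := nfun_eq t μ ht hμ0 hμ2
  have hTr : T = (T + μ) / 2 + π * u := by rw [hu, hT]; field_simp; ring
  have hμr : μ = (T + μ) / 2 + -(π * u) := by rw [hu, hT]; field_simp; ring
  have hTs : ((T : ℂ)) * Complex.I
      = ((((T + μ) / 2 : ℝ)) : ℂ) * Complex.I + (((π * u : ℝ)) : ℂ) * Complex.I := by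
    nth_rewrite 1 [hTr]; push_cast; ring
  have hμs : ((μ : ℂ)) * Complex.I
      = ((((T + μ) / 2 : ℝ)) : ℂ) * Complex.I + (((-(π * u) : ℝ)) : ℂ) * Complex.I := by
    nth_rewrite 1 [hμr]; push_cast; ring
  have key : Complex.exp ((T : ℂ) * Complex.I) - Complex.exp ((μ : ℂ) * Complex.I)
      = 2 * ((Real.sin (π * u) : ℝ) : ℂ) * Complex.I
        * Complex.exp ((((T + μ) / 2 : ℝ) : ℂ) * Complex.I) := by
    rw [hTs, hμs, Complex.exp_add, Complex.exp_add, ← mul_sub, exp_diff (π * u)]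
    ring
  have hui : ∀ k : ℤ, u ≠ k := by
    intro k hk
    apply hne
    have hμT : (μ : ℂ) * Complex.I = (T : ℂ) * Complex.I + (-k : ℤ) * (2 * π * Complex.I) := by
      have hμ' : μ = T - 2 * π * k := by
        have hk' : (k : ℝ) = t - μ / (2 * π) := by rw [← hk, hu]
        rw [hT, hk']
        field_simp
        ring
      nth_rewrite 1 [hμ']
      push_cast
      ring
    rw [hμT, Complex.exp_add, Complex.exp_int_mul_two_pi_mul_I, mul_one]
  have hsgn : 0 < (-1 : ℝ) ^ ⌊u⌋ * Real.sin (π * u) := sin_sign u hui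
  refine ⟨2 * ((-1 : ℝ) ^ ⌊u⌋ * Real.sin (π * u)), by linarith, ?_⟩
  rw [key]
  have hreal : π * (t + μ / (2 * π) + (n : ℝ) - 1/2)
      = (T + μ) / 2 + (n : ℝ) * π + (-(π/2)) := by
    rw [hT]; field_simp; ring
  have hexp : Complex.exp (((π * (t + μ / (2 * π) + (n : ℝ) - 1/2) : ℝ) : ℂ) * Complex.I)
      = Complex.exp ((((T + μ) / 2 : ℝ) : ℂ) * Complex.I)
        * Complex.exp (((π : ℝ) : ℂ) * Complex.I) ^ (n : ℤ)
        * Complex.exp ((((-(π/2) : ℝ)) : ℂ) * Complex.I) := by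
    rw [← Complex.exp_int_mul, ← Complex.exp_add, ← Complex.exp_add]
    congr 1
    rw [show ((π * (t + μ / (2 * π) + (n : ℝ) - 1/2) : ℝ) : ℂ)
        = (((T + μ) / 2 + (n : ℝ) * π + (-(π/2)) : ℝ) : ℂ) from Complex.ofReal_inj.mpr hreal]
    push_cast
    ring
  rw [hexp, Complex.exp_pi_mul_I]
  have hexpI : Complex.exp ((((-(π/2) : ℝ)) : ℂ) * Complex.I) = - Complex.I := by
    rw [Complex.exp_mul_I]
    push_cast
    rw [Complex.cos_neg, Complex.sin_neg]
    simp [Complex.cos_pi_div_two, Complex.sin_pi_div_two]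
  rw [hexpI]
  have hodd : ((-1 : ℂ)) ^ (n : ℤ) = - ((-1 : ℂ) ^ ⌊u⌋) := by
    rw [hnval, zpow_add₀ (by norm_num : (-1:ℂ) ≠ 0)]
    simp
  rw [hodd]
  have hsq : ((-1 : ℂ)) ^ ⌊u⌋ * ((-1 : ℂ)) ^ ⌊u⌋ = 1 := by
    rw [← zpow_add₀ (by norm_num : (-1:ℂ) ≠ 0)]
    exact Even.neg_one_zpow ⟨⌊u⌋, rfl⟩
  have hcast : ((2 * ((-1:ℝ) ^ ⌊u⌋ * Real.sin (π * u)) : ℝ) : ℂ)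
      = 2 * ((-1:ℂ) ^ ⌊u⌋ * ((Real.sin (π * u) : ℝ) : ℂ)) := by
    push_cast
    ring
  rw [hcast]
  linear_combination (-(2 * ((Real.sin (π * u) : ℝ) : ℂ) * Complex.I
    * Complex.exp ((((T + μ) / 2 : ℝ) : ℂ) * Complex.I))) * hsq

open Classical in
/-- contribution of a single root to the phase count -/
noncomputable def cfun (t : ℝ) (z : ℂ) : ℝ :=
  t * (1 + if z = 0 then 1 else 0) + (nfun t z : ℝ) + (if z = 1 then 1 else 0) / 2

lemma exists_mu (z : ℂ) (hz : ‖z‖ = 1) :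
    ∃ μ : ℝ, 0 < μ ∧ μ ≤ 2 * π ∧ Complex.exp ((μ : ℂ) * Complex.I) = z := by
  have harg := Complex.norm_mul_exp_arg_mul_I z
  rw [hz] at harg
  simp only [Complex.ofReal_one, one_mul] at harg
  rcases le_or_gt (Complex.arg z) 0 with h | h
  · refine ⟨Complex.arg z + 2 * π, by nlinarith [Complex.neg_pi_lt_arg z, Real.pi_pos], by
      nlinarith [Real.pi_pos], ?_⟩
    rw [show ((Complex.arg z + 2 * π : ℝ) : ℂ) * Complex.I
        = (Complex.arg z : ℂ) * Complex.I + (1 : ℤ) * (2 * π * Complex.I) by push_cast; ring,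
      Complex.exp_add, Complex.exp_int_mul_two_pi_mul_I, mul_one, harg]
  · exact ⟨Complex.arg z, h, by nlinarith [Complex.arg_le_pi z, Real.pi_pos], harg⟩

section atoms

variable {t : ℝ} (ht : 0 < t)

local notation "ζ" => Complex.exp (((2 * π * t : ℝ) : ℂ) * Complex.I)

include ht

omit ht in
lemma atom_zero : Ph (cfun t 0) (ζ - 0) := by
  have h0 : cfun t 0 = 2 * t := by
    simp [cfun, nfun_zero]
    ring
  rw [h0, sub_zero]
  exact ⟨1, one_pos, by rw [Complex.ofReal_one, one_mul]; congr 2; push_cast; ring⟩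

lemma atom_one (hne : (1 : ℂ) ≠ ζ) : Ph (cfun t 1) (ζ - 1) := by
  have h2π : Complex.exp (((2 * π : ℝ) : ℂ) * Complex.I) = 1 := by
    push_cast
    exact Complex.exp_two_pi_mul_I
  have := phase_factor t (2 * π) ht two_pi_pos (le_refl _) (by rw [h2π]; exact hne)
  rw [h2π] at this
  apply this.congr
  have : (2 * π) / (2 * π) = 1 := div_self (ne_of_gt two_pi_pos)
  rw [this]
  norm_num [cfun]
  ring

lemma atom_neg_one (hne : (-1 : ℂ) ≠ ζ) : Ph (cfun t (-1)) (ζ - (-1)) := by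
  have hπ : Complex.exp (((π : ℝ) : ℂ) * Complex.I) = -1 := Complex.exp_pi_mul_I
  have := phase_factor t π ht Real.pi_pos (by linarith [Real.pi_pos]) (by rw [hπ]; exact hne)
  rw [hπ] at this
  apply this.congr
  have hd : π / (2 * π) = 1 / 2 := by
    rw [eq_div_iff (two_ne_zero)]
    field_simp
  rw [hd]
  simp only [cfun, if_neg (by norm_num : (-1:ℂ) ≠ 0), if_neg (by norm_num : (-1:ℂ) ≠ 1)]
  ring

lemma atom_pair (z : ℂ) (habs : ‖z‖ = 1) (hconj : z ≠ (starRingEnd ℂ) z)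
    (hne : z ≠ ζ) (hne' : (starRingEnd ℂ) z ≠ ζ) :
    Ph (cfun t z + cfun t ((starRingEnd ℂ) z)) ((ζ - z) * (ζ - (starRingEnd ℂ) z)) := by
  obtain ⟨μ, hμ0, hμ2, hμz⟩ := exists_mu z habs
  have hz1 : z ≠ 1 := by
    intro h
    apply hconj
    rw [h, map_one]
  have hμlt : μ < 2 * π := by
    rcases lt_or_eq_of_le hμ2 with h | h
    · exact h
    · exfalso
      apply hz1
      rw [← hμz, h]
      push_cast
      exact Complex.exp_two_pi_mul_I
  have hconjz : Complex.exp ((((2 * π - μ : ℝ)) : ℂ) * Complex.I) = (starRingEnd ℂ) z := by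
    rw [← hμz, ← Complex.exp_conj]
    rw [show (starRingEnd ℂ) ((μ : ℂ) * Complex.I) = -((μ : ℂ) * Complex.I) by
      simp [Complex.conj_I, Complex.conj_ofReal]]
    rw [show (((2 * π - μ : ℝ)) : ℂ) * Complex.I
        = -((μ : ℂ) * Complex.I) + (1 : ℤ) * (2 * π * Complex.I) by push_cast; ring,
      Complex.exp_add, Complex.exp_int_mul_two_pi_mul_I, mul_one]
  have h1 := phase_factor t μ ht hμ0 hμ2 (by rw [hμz]; exact hne)
  have h2 := phase_factor t (2 * π - μ) ht (by linarith) (by linarith)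
    (by rw [hconjz]; exact hne')
  rw [hμz] at h1
  rw [hconjz] at h2
  have := h1.mul h2
  apply this.congr
  have hz0 : z ≠ 0 := by
    intro h; rw [h] at habs; simp at habs
  have hcz0 : (starRingEnd ℂ) z ≠ 0 := by
    simpa using hz0
  have hcz1 : (starRingEnd ℂ) z ≠ 1 := by
    intro h
    apply hconj
    have : z = 1 := by
      have := congrArg (starRingEnd ℂ) h
      simpa using this
    rw [this, map_one]
  simp only [cfun, if_neg hz0, if_neg hz1, if_neg hcz0, if_neg hcz1]
  have : μ / (2 * π) + (2 * π - μ) / (2 * π) = 1 := by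
    field_simp
    ring
  linarith [this]

end atoms

lemma prod_phase (t : ℝ) (ht : 0 < t) :
    ∀ N : ℕ, ∀ S : Multiset ℂ, S.card ≤ N →
      S.map (starRingEnd ℂ) = S →
      (∀ z ∈ S, z = 0 ∨ ‖z‖ = 1) →
      (∀ z ∈ S, z ≠ Complex.exp (((2 * π * t : ℝ) : ℂ) * Complex.I)) →
      Ph ((S.map (cfun t)).sum)
        ((S.map (fun z => Complex.exp (((2 * π * t : ℝ) : ℂ) * Complex.I) - z)).prod) := by
  intro N
  induction N with
  | zero =>
    intro S hcard _ _ _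
    have hS : S = 0 := Multiset.card_eq_zero.mp (Nat.le_zero.mp hcard)
    subst hS
    refine ⟨1, one_pos, ?_⟩
    simp
  | succ N ih =>
    intro S hcard hconj hmem hne
    by_cases hS0 : S = 0
    · subst hS0
      refine ⟨1, one_pos, ?_⟩
      simp
    obtain ⟨z, hz⟩ := Multiset.exists_mem_of_ne_zero hS0
    have hinj : Function.Injective (starRingEnd ℂ) := RingHom.injective _
    by_cases hcz : (starRingEnd ℂ) z = z
    · -- self-conjugate root
      have hS : S = z ::ₘ S.erase z := (Multiset.cons_erase hz).symm
      have hc' : (S.erase z).map (starRingEnd ℂ) = S.erase z := by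
        rw [Multiset.map_erase _ hinj z S, hconj, hcz]
      have hcard' : (S.erase z).card ≤ N := by
        have h1 := Multiset.card_erase_of_mem hz
        have h2 := Multiset.card_pos.mpr (fun h => hS0 h)
        rw [Nat.pred_eq_sub_one] at h1
        omega
      have hih := ih (S.erase z) hcard' hc'
        (fun w hw => hmem w (Multiset.mem_of_mem_erase hw))
        (fun w hw => hne w (Multiset.mem_of_mem_erase hw))
      have hatom : Ph (cfun t z)
          (Complex.exp (((2 * π * t : ℝ) : ℂ) * Complex.I) - z) := by
        rcases hmem z hz with h0 | h1
        · subst h0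
          exact atom_zero
        · have hre : ((z.re : ℝ) : ℂ) = z := Complex.conj_eq_iff_re.mp hcz
          have habs : |z.re| = 1 := by
            rw [← Real.norm_eq_abs, ← Complex.norm_real, hre, h1]
          rcases abs_eq (by norm_num : (0:ℝ) ≤ 1) |>.mp habs with h | h
          · have hz1 : z = 1 := by rw [← hre, h]; norm_num
            subst hz1
            exact atom_one ht (hne 1 hz)
          · have hz1 : z = -1 := by rw [← hre, h]; norm_num
            subst hz1
            exact atom_neg_one ht (hne (-1) hz)
      rw [hS, Multiset.map_cons, Multiset.map_cons, Multiset.sum_cons, Multiset.prod_cons]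
      exact hatom.mul hih
    · -- conjugate pair
      have hczS : (starRingEnd ℂ) z ∈ S := by
        rw [← hconj]; exact Multiset.mem_map_of_mem _ hz
      have hczS' : (starRingEnd ℂ) z ∈ S.erase z := (Multiset.mem_erase_of_ne hcz).mpr hczS
      set S'' := (S.erase z).erase ((starRingEnd ℂ) z) with hS''
      have hS : S = z ::ₘ (starRingEnd ℂ) z ::ₘ S'' := by
        rw [hS'', Multiset.cons_erase hczS', Multiset.cons_erase hz]
      have hc'' : S''.map (starRingEnd ℂ) = S'' := by
        rw [hS'', Multiset.map_erase _ hinj _ _, Multiset.map_erase _ hinj z S, hconj,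
          Complex.conj_conj, Multiset.erase_comm]
      have hcard'' : S''.card ≤ N := by
        have h1 := Multiset.card_erase_of_mem hz
        have h2 := Multiset.card_erase_of_mem hczS'
        have h3 := Multiset.card_pos.mpr (fun h => hS0 h)
        rw [Nat.pred_eq_sub_one] at h1 h2
        rw [hS'']
        omega
      have hmem'' : ∀ w ∈ S'', w ∈ S := fun w hw =>
        Multiset.mem_of_mem_erase (Multiset.mem_of_mem_erase hw)
      have hih := ih S'' hcard'' hc''
        (fun w hw => hmem w (hmem'' w hw))
        (fun w hw => hne w (hmem'' w hw))
      have habs : ‖z‖ = 1 := by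
        rcases hmem z hz with h0 | h1
        · exfalso; apply hcz; rw [h0]; simp
        · exact h1
      have hpair := atom_pair ht z habs (fun h => hcz h.symm) (hne z hz)
        (hne _ hczS)
      rw [hS, Multiset.map_cons, Multiset.map_cons, Multiset.map_cons, Multiset.map_cons,
        Multiset.sum_cons, Multiset.sum_cons, Multiset.prod_cons, Multiset.prod_cons]
      have := hpair.mul hih
      rw [← mul_assoc, ← add_assoc]
      exact this

lemma argCount_eq (t : ℝ) (f : Polynomial ℝ) :
    argCount t f = (((f.map (algebraMap ℝ ℂ)).roots).map (nfun t)).sum := rfl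

lemma csum_eq (t : ℝ) (S : Multiset ℂ) :
    (S.map (cfun t)).sum
      = t * ((S.count 0 : ℝ) + (S.card : ℝ)) + ((S.map (nfun t)).sum : ℝ)
        + (S.count 1 : ℝ) / 2 := by
  induction S using Multiset.induction with
  | empty => simp
  | cons a s ihs =>
    simp only [Multiset.map_cons, Multiset.sum_cons, Multiset.card_cons,
      Multiset.count_cons, ihs]
    push_cast
    by_cases h0 : a = 0
    · subst h0
      simp only [cfun, if_pos rfl, if_neg (zero_ne_one' ℂ)]
      norm_num
      ring
    · by_cases h1 : a = 1
      · subst h1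
        simp only [cfun, if_neg (one_ne_zero' ℂ), if_pos rfl]
        norm_num [(zero_ne_one' ℂ).symm]
        ring
      · simp only [cfun, if_neg h0, if_neg h1]
        rw [if_neg (fun h => h0 h.symm), if_neg (fun h => h1 h.symm)]
        norm_num
        ring

lemma poly_phase (t : ℝ) (ht : 0 < t) (f : Polynomial ℝ)
    (hfl : 0 < f.leadingCoeff) (hfr : RootsZeroOrUnity f)
    (hfζ : Polynomial.aeval (Complex.exp (((2 * π * t : ℝ) : ℂ) * Complex.I)) f ≠ 0) :
    Ph (t * ((rootMultiplicity 0 f : ℝ) + (f.natDegree : ℝ)) + (argCount t f : ℝ)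
        + (rootMultiplicity 1 f : ℝ) / 2)
      (Polynomial.aeval (Complex.exp (((2 * π * t : ℝ) : ℂ) * Complex.I)) f) := by
  set ζ : ℂ := Complex.exp (((2 * π * t : ℝ) : ℂ) * Complex.I) with hζdef
  set F : Polynomial ℂ := f.map (algebraMap ℝ ℂ) with hFdef
  have hinj : Function.Injective (algebraMap ℝ ℂ) := Complex.ofReal_injective
  have haeval : Polynomial.aeval ζ f = F.eval ζ := by
    rw [Polynomial.aeval_def, Polynomial.eval₂_eq_eval_map]
  have hsplit : F.Splits := IsAlgClosed.splits F
  have hfact := hsplit.eq_prod_roots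
  have heval : F.eval ζ = ((f.leadingCoeff : ℝ) : ℂ) * (F.roots.map (fun a => ζ - a)).prod := by
    conv_lhs => rw [hfact]
    rw [Polynomial.eval_mul, Polynomial.eval_C, Polynomial.eval_multiset_prod,
      Multiset.map_map]
    congr 1
    · rw [hFdef, Polynomial.leadingCoeff_map (algebraMap ℝ ℂ)]
      rfl
    · congr 1
      ext a
      simp
  have hconjS : F.roots.map (starRingEnd ℂ) = F.roots := by
    have hFc : F.map (starRingEnd ℂ) = F := by
      rw [hFdef, Polynomial.map_map]
      congr 1
      ext x
      simp [Complex.conj_ofReal]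
    conv_rhs => rw [← hFc]
    rw [hsplit.roots_map_of_injective (starRingEnd ℂ).injective]
  have hmemS : ∀ z ∈ F.roots, z = 0 ∨ ‖z‖ = 1 := by
    intro z hz
    rcases hfr z hz with h0 | ⟨n, hn, hzn⟩
    · exact Or.inl h0
    · right
      exact Complex.norm_eq_one_of_pow_eq_one hzn (by omega)
  have hneS : ∀ z ∈ F.roots, z ≠ ζ := by
    intro z hz hzζ
    apply hfζ
    rw [haeval, ← hzζ]
    exact Polynomial.isRoot_of_mem_roots hz
  have hprod := prod_phase t ht F.roots.card F.roots le_rfl hconjS hmemS hneS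
  have hlc : Ph 0 ((f.leadingCoeff : ℝ) : ℂ) := ⟨f.leadingCoeff, hfl, by simp⟩
  have := hlc.mul hprod
  rw [zero_add] at this
  rw [haeval, heval]
  apply this.congr
  rw [csum_eq]
  have ha : F.roots.count 0 = rootMultiplicity 0 f := by
    rw [Polynomial.count_roots, hFdef]
    have := Polynomial.eq_rootMultiplicity_map (p := f) hinj 0
    rw [map_zero] at this
    rw [← this]
  have h1 : F.roots.count 1 = rootMultiplicity 1 f := by
    rw [Polynomial.count_roots, hFdef]
    have := Polynomial.eq_rootMultiplicity_map (p := f) hinj 1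
    rw [map_one] at this
    rw [← this]
  have hcard : F.roots.card = f.natDegree := by
    rw [Polynomial.splits_iff_card_roots.mp hsplit, hFdef, Polynomial.natDegree_map]
  rw [ha, h1, hcard, argCount_eq]

/-- Theorems 1.4/1.5 (polynomial content): if `f(ζ)/g(ζ)` is a real number `r`, then
`π_{κ/d}(f) − π_{κ/d}(g)` is an integer, even if `r > 0` and odd if `r < 0`. -/
theorem piFn_sub_int_parity (κ d : ℕ) (hκ : 0 < κ) (hd : 0 < d) (hcop : Nat.Coprime κ d)
    (f g : Polynomial ℝ) (hf : f ≠ 0) (hg : g ≠ 0)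
    (hfl : 0 < f.leadingCoeff) (hgl : 0 < g.leadingCoeff)
    (hfr : RootsZeroOrUnity f) (hgr : RootsZeroOrUnity g)
    (ζ : ℂ) (hζ : ζ = Complex.exp (2 * (Real.pi : ℂ) * (κ : ℂ) / (d : ℂ) * Complex.I))
    (hfζ : Polynomial.aeval ζ f ≠ 0) (hgζ : Polynomial.aeval ζ g ≠ 0)
    (r : ℝ) (hr : Polynomial.aeval ζ f / Polynomial.aeval ζ g = (r : ℂ)) :
    ∃ m : ℤ, piFn κ d f - piFn κ d g = (m : ℚ) ∧
      (0 < r → Even m) ∧ (r < 0 → Odd m) := by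
  have hpne := Real.pi_ne_zero
  set t : ℝ := (κ : ℝ) / (d : ℝ) with ht_def
  have ht : 0 < t := by
    apply div_pos <;> [exact_mod_cast hκ; exact_mod_cast hd]
  have hζ' : ζ = Complex.exp (((2 * π * t : ℝ) : ℂ) * Complex.I) := by
    rw [hζ]
    congr 1
    push_cast [ht_def]
    ring
  rw [hζ'] at hfζ hgζ hr
  obtain ⟨ρf, hρf, hfeq⟩ := poly_phase t ht f hfl hfr hfζ
  obtain ⟨ρg, hρg, hgeq⟩ := poly_phase t ht g hgl hgr hgζ
  set qf : ℝ := t * ((rootMultiplicity 0 f : ℝ) + (f.natDegree : ℝ)) + (argCount t f : ℝ)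
      + (rootMultiplicity 1 f : ℝ) / 2 with hqf
  set qg : ℝ := t * ((rootMultiplicity 0 g : ℝ) + (g.natDegree : ℝ)) + (argCount t g : ℝ)
      + (rootMultiplicity 1 g : ℝ) / 2 with hqg
  have hfg : Polynomial.aeval (Complex.exp (((2 * π * t : ℝ) : ℂ) * Complex.I)) f
      = (r : ℂ) * Polynomial.aeval (Complex.exp (((2 * π * t : ℝ) : ℂ) * Complex.I)) g := by
    rw [← hr, div_mul_cancel₀ _ hgζ]
  rw [hfeq, hgeq] at hfg
  have hsplitexp : Complex.exp (((π * qf : ℝ) : ℂ) * Complex.I)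
      = Complex.exp (((π * (qf - qg) : ℝ) : ℂ) * Complex.I)
        * Complex.exp (((π * qg : ℝ) : ℂ) * Complex.I) := by
    rw [← Complex.exp_add]
    congr 1
    push_cast
    ring
  have hEg : Complex.exp (((π * qg : ℝ) : ℂ) * Complex.I) ≠ 0 := Complex.exp_ne_zero _
  have hρfC : (ρf : ℂ) ≠ 0 := by exact_mod_cast ne_of_gt hρf
  have h2 : (ρf : ℂ) * Complex.exp (((π * (qf - qg) : ℝ) : ℂ) * Complex.I)
      = (r : ℂ) * (ρg : ℂ) := by
    apply mul_right_cancel₀ hEg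
    rw [mul_assoc, ← hsplitexp]
    linear_combination hfg
  have hD : Complex.exp (((π * (qf - qg) : ℝ) : ℂ) * Complex.I)
      = ((r * ρg / ρf : ℝ) : ℂ) := by
    rw [show ((r * ρg / ρf : ℝ) : ℂ) = (r : ℂ) * (ρg : ℂ) / (ρf : ℂ) by push_cast; ring,
      eq_div_iff hρfC]
    linear_combination h2
  have him := congrArg Complex.im hD
  rw [Complex.exp_ofReal_mul_I_im, Complex.ofReal_im] at him
  obtain ⟨k, hk⟩ := Real.sin_eq_zero_iff.mp him
  have hqfg : qf - qg = (k : ℝ) := by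
    apply mul_left_cancel₀ hpne
    linear_combination -hk
  have hcos : ((-1 : ℂ)) ^ (k : ℤ) = ((r * ρg / ρf : ℝ) : ℂ) := by
    rw [← Complex.exp_pi_mul_I, ← Complex.exp_int_mul, ← hD]
    congr 1
    push_cast [hqfg]
    ring
  have hsign : (-1 : ℝ) ^ (k : ℤ) = r * ρg / ρf := by
    rw [show ((-1 : ℂ)) = (((-1 : ℝ)) : ℂ) by norm_num, ← Complex.ofReal_zpow] at hcos
    exact_mod_cast hcos
  have hQ : piFn κ d f - piFn κ d g = (k : ℚ) := by
    have hQR : ((piFn κ d f - piFn κ d g : ℚ) : ℝ) = ((k : ℚ) : ℝ) := by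
      have hstep : ((piFn κ d f - piFn κ d g : ℚ) : ℝ) = qf - qg := by
        simp only [piFn, hqf, hqg, ht_def]
        push_cast
        ring
      rw [hstep, hqfg]
      norm_cast
    exact_mod_cast hQR
  refine ⟨k, hQ, ?_, ?_⟩
  · intro hrpos
    rcases Int.even_or_odd k with he | ho
    · exact he
    · exfalso
      rw [ho.neg_one_zpow] at hsign
      have : 0 < r * ρg / ρf := div_pos (mul_pos hrpos hρg) hρf
      linarith
  · intro hrneg
    rcases Int.even_or_odd k with he | ho
    · exfalso
      rw [he.neg_one_zpow] at hsign
      have : r * ρg / ρf < 0 := div_neg_of_neg_of_pos (mul_neg_of_neg_of_pos hrneg hρg) hρf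
      linarith
    · exact ho
end

section
/- Let κ be an odd positive integer and let f be a nonzero polynomial in one variable q with real coefficients, all of whose complex roots are either 0 or roots of unity, such that f(−1) ≠ 0. Then π_{κ/2}(f) = κ·A(f). -/
open Polynomial

lemma natCard_exp_zero (B : ℝ) :
    Nat.card {l : ℝ // 0 < l ∧ l ≤ B ∧ Complex.exp ((l : ℂ) * Complex.I) = 0} = 0 := by
  have : IsEmpty {l : ℝ // 0 < l ∧ l ≤ B ∧ Complex.exp ((l : ℂ) * Complex.I) = 0} :=
    ⟨fun ⟨l, _, _, h⟩ => Complex.exp_ne_zero _ h⟩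
  exact Nat.card_of_isEmpty

lemma natCard_exp_unit (m : ℕ) (t : ℝ) (ht : t = (2 * (m : ℝ) + 1) / 2) (ξ : ℂ)
    (hξ : ‖ξ‖ = 1) :
    Nat.card {l : ℝ // 0 < l ∧ l ≤ 2 * Real.pi * t ∧ Complex.exp ((l : ℂ) * Complex.I) = ξ} =
      m + (if 0 < ξ.arg then 1 else 0) := by
  have hπ := Real.pi_pos
  set a := ξ.arg with ha
  have ha1 : -Real.pi < a := Complex.neg_pi_lt_arg ξ
  have ha2 : a ≤ Real.pi := Complex.arg_le_pi ξ
  have hexp : Complex.exp ((a : ℂ) * Complex.I) = ξ := by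
    have h := Complex.norm_mul_exp_arg_mul_I ξ
    rwa [hξ, Complex.ofReal_one, one_mul] at h
  have key : ∀ l : ℝ, Complex.exp ((l : ℂ) * Complex.I) = ξ ↔
      ∃ k : ℤ, l = a + 2 * Real.pi * (k : ℝ) := by
    intro l
    rw [← hexp, Complex.exp_eq_exp_iff_exists_int]
    constructor
    · rintro ⟨k, hk⟩
      refine ⟨k, ?_⟩
      have h2 : (l : ℂ) * Complex.I = ((a + 2 * Real.pi * (k : ℝ) : ℝ) : ℂ) * Complex.I := by
        push_cast
        rw [hk]; ring
      have h3 := mul_right_cancel₀ Complex.I_ne_zero h2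
      exact_mod_cast h3
    · rintro ⟨k, hk⟩
      exact ⟨k, by rw [hk]; push_cast; ring⟩
  set L : ℤ := if 0 < a then -1 else 0 with hL
  have hbnd : ∀ k : ℤ, (0 < a + 2 * Real.pi * (k : ℝ) ∧
      a + 2 * Real.pi * (k : ℝ) ≤ 2 * Real.pi * t) ↔ (L < k ∧ k ≤ (m : ℤ)) := by
    intro k
    rw [ht, hL]
    constructor
    · rintro ⟨h0, hB⟩
      constructor
      · by_contra hc
        push_neg at hc
        split_ifs at hc with hpa
        · have : (k : ℝ) ≤ -1 := by exact_mod_cast hc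
          nlinarith
        · push_neg at hpa
          have : (k : ℝ) ≤ 0 := by exact_mod_cast hc
          nlinarith
      · by_contra hc
        push_neg at hc
        have : ((m : ℝ) + 1) ≤ (k : ℝ) := by exact_mod_cast hc
        nlinarith
    · rintro ⟨h1, h2⟩
      have h2' : (k : ℝ) ≤ (m : ℝ) := by exact_mod_cast h2
      split_ifs at h1 with hpa
      · have h1' : (0 : ℝ) ≤ (k : ℝ) := by exact_mod_cast h1
        constructor
        · nlinarith
        · nlinarith
      · push_neg at hpa
        have h1' : (1 : ℝ) ≤ (k : ℝ) := by exact_mod_cast h1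
        constructor
        · nlinarith
        · nlinarith
  have hinj : Function.Injective (fun k : ℤ => a + 2 * Real.pi * (k : ℝ)) := by
    intro k1 k2 h
    simp only at h
    have h' : 2 * Real.pi * (k1 : ℝ) = 2 * Real.pi * (k2 : ℝ) := by linarith
    have h'' := mul_left_cancel₀ (by positivity : (2 * Real.pi) ≠ 0) h'
    exact_mod_cast h''
  have hset : {l : ℝ | 0 < l ∧ l ≤ 2 * Real.pi * t ∧ Complex.exp ((l : ℂ) * Complex.I) = ξ} =
      (fun k : ℤ => a + 2 * Real.pi * (k : ℝ)) '' ↑(Finset.Ioc L (m : ℤ)) := by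
    ext l
    simp only [Set.mem_setOf_eq, Set.mem_image, Finset.coe_Ioc, Set.mem_Ioc]
    constructor
    · rintro ⟨h0, hB, he⟩
      obtain ⟨k, hk⟩ := (key l).mp he
      subst hk
      exact ⟨k, (hbnd k).mp ⟨h0, hB⟩, rfl⟩
    · rintro ⟨k, hk, rfl⟩
      obtain ⟨h0, hB⟩ := (hbnd k).mpr hk
      exact ⟨h0, hB, (key _).mpr ⟨k, rfl⟩⟩
  have hcard : Nat.card {l : ℝ // 0 < l ∧ l ≤ 2 * Real.pi * t ∧
      Complex.exp ((l : ℂ) * Complex.I) = ξ} =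
      Set.ncard {l : ℝ | 0 < l ∧ l ≤ 2 * Real.pi * t ∧ Complex.exp ((l : ℂ) * Complex.I) = ξ} :=
    Nat.card_coe_set_eq _
  rw [hcard, hset, Set.ncard_image_of_injective _ hinj, Set.ncard_coe_finset, Int.card_Ioc]
  rw [hL]
  split_ifs <;> omega

lemma sum_map_ite (p : ℂ → Prop) [DecidablePred p] (c : ℕ) (s : Multiset ℂ) :
    (s.map fun ξ => if p ξ then c else 0).sum = c * s.countP p := by
  induction s using Multiset.induction_on with
  | empty => simp
  | cons x s ih =>
    by_cases hx : p x <;>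
      simp [hx, ih, Multiset.countP_cons, mul_add, Nat.add_comm]

lemma countP_four (p q u v : ℂ → Prop) [DecidablePred p] [DecidablePred q] [DecidablePred u]
    [DecidablePred v] (s : Multiset ℂ)
    (h : ∀ ξ ∈ s, ((if p ξ then 1 else 0) + (if q ξ then 1 else 0) + (if u ξ then 1 else 0)
      + (if v ξ then 1 else 0) : ℕ) = 1) :
    s.countP p + s.countP q + s.countP u + s.countP v = Multiset.card s := by
  induction s using Multiset.induction_on with
  | empty => simp
  | cons x s ih =>
    have hx := h x (Multiset.mem_cons_self x s)
    have hs := ih fun ξ hξ => h ξ (Multiset.mem_cons_of_mem hξ)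
    simp only [Multiset.countP_cons, Multiset.card_cons]
    split_ifs at hx ⊢ <;> omega

/-- Proposition 5.1, case `d = 2`: if `κ` is odd and `f(−1) ≠ 0` then `π_{κ/2}(f) = κ·A(f)`. -/
theorem piFn_d_two (κ : ℕ) (hκ : 0 < κ) (hodd : Odd κ) (f : Polynomial ℝ) (hf : f ≠ 0)
    (hroots : RootsZeroOrUnity f) (h1 : f.eval (-1) ≠ 0) :
    piFn κ 2 f = (κ : ℚ) * (f.natDegree : ℚ) := by
  classical
  obtain ⟨m, hm⟩ := hodd
  have hinj : Function.Injective (algebraMap ℝ ℂ) := (algebraMap ℝ ℂ).injective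
  set F : Polynomial ℂ := f.map (algebraMap ℝ ℂ) with hFdef
  have hF0 : F ≠ 0 := (Polynomial.map_ne_zero_iff hinj).mpr hf
  set S : Multiset ℂ := F.roots with hSdef
  -- -1 is not a root of F
  have hne1 : ∀ ξ ∈ S, ξ ≠ (-1 : ℂ) := by
    intro ξ hξ hc
    have hr : F.IsRoot ξ := ((Polynomial.mem_roots hF0).mp hξ)
    apply h1
    have heval : F.eval (algebraMap ℝ ℂ (-1)) = algebraMap ℝ ℂ (f.eval (-1)) := by
      rw [hFdef, Polynomial.eval_map, Polynomial.eval₂_at_apply]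
    have hm1 : algebraMap ℝ ℂ (-1) = (-1 : ℂ) := by simp
    rw [hm1] at heval
    rw [hc] at hr
    have : algebraMap ℝ ℂ (f.eval (-1)) = 0 := by rw [← heval]; exact hr
    exact hinj (by simpa using this)
  -- roots of unity have absolute value 1
  have habs : ∀ ξ : ℂ, (∃ n : ℕ, 0 < n ∧ ξ ^ n = 1) → ‖ξ‖ = 1 := by
    rintro ξ ⟨n, hn, hξn⟩
    have h1' : ‖ξ‖ ^ n = 1 := by rw [← norm_pow, hξn, norm_one]
    have h0 : 0 ≤ ‖ξ‖ := norm_nonneg _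
    rcases lt_trichotomy ‖ξ‖ 1 with h | h | h
    · exact absurd h1' (by have := pow_lt_one₀ h0 h hn.ne'; linarith)
    · exact h
    · exact absurd h1' (by have := one_lt_pow₀ h hn.ne'; linarith)
  -- real points of modulus one
  have hreal : ∀ ξ : ℂ, ‖ξ‖ = 1 → ξ.im = 0 → ξ = 1 ∨ ξ = -1 := by
    intro ξ hξ him
    have hsq : ξ.re * ξ.re + ξ.im * ξ.im = 1 := by
      have h := Complex.sq_norm ξ
      rw [hξ, Complex.normSq_apply] at h
      nlinarith [h]
    rw [him, mul_zero, add_zero] at hsq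
    rcases le_or_gt 0 ξ.re with h | h
    · left
      have : ξ.re = 1 := by nlinarith
      exact Complex.ext (by simp [this]) (by simp [him])
    · right
      have : ξ.re = -1 := by nlinarith
      exact Complex.ext (by simp [this]) (by simp [him])
  -- the value of each Nat.card summand
  have h_each : ∀ ξ ∈ S,
      Nat.card {l : ℝ // 0 < l ∧ l ≤ 2 * Real.pi * ((κ : ℝ) / ((2 : ℕ) : ℝ)) ∧
        Complex.exp ((l : ℂ) * Complex.I) = ξ} =
      (if ξ ≠ 0 then m else 0) + (if 0 < ξ.arg then 1 else 0) := by
    intro ξ hξ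
    rcases hroots ξ hξ with h0 | hu
    · subst h0
      rw [natCard_exp_zero]
      simp [Complex.arg_zero]
    · have habs1 := habs ξ hu
      have hξ0 : ξ ≠ 0 := by
        intro h
        rw [h, norm_zero] at habs1
        norm_num at habs1
      rw [natCard_exp_unit m _ (by rw [hm]; push_cast; ring) ξ habs1, if_pos hξ0]
  -- the sum
  have hsum : argCount ((κ : ℝ) / ((2 : ℕ) : ℝ)) f =
      m * S.countP (fun ξ => ξ ≠ 0) + S.countP (fun ξ => 0 < ξ.arg) := by
    unfold argCount
    rw [← hFdef, ← hSdef, Multiset.map_congr rfl h_each, Multiset.sum_map_add,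
      sum_map_ite, sum_map_ite, one_mul]
  -- conjugation invariance of roots
  have hsplits : F.Splits := IsAlgClosed.splits F
  have hconj : S.map (starRingEnd ℂ) = S := by
    have h2 : F.map (starRingEnd ℂ) = F := by
      rw [hFdef, Polynomial.map_map]
      congr 1
      ext x
      simp [Complex.conj_ofReal]
    have h1' : (F.map (starRingEnd ℂ)).roots = S.map (starRingEnd ℂ) :=
      hsplits.roots_map (starRingEnd ℂ)
    rw [h2] at h1'
    exact h1'.symm
  have hPP : S.countP (fun ξ => 0 < ((starRingEnd ℂ) ξ).arg) =
      S.countP (fun ξ => 0 < ξ.arg) := by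
    conv_rhs => rw [← hconj]
    rw [Multiset.countP_map, Multiset.countP_eq_card_filter]
  -- pointwise indicator identity
  have hpt : ∀ ξ ∈ S, ((if 0 < ξ.arg then 1 else 0)
      + (if 0 < ((starRingEnd ℂ) ξ).arg then 1 else 0)
      + (if ξ = 0 then 1 else 0) + (if ξ = 1 then 1 else 0) : ℕ) = 1 := by
    intro ξ hξ
    rcases hroots ξ hξ with h0 | hu
    · subst h0
      simp [Complex.arg_zero]
    · have habs1 := habs ξ hu
      have hξ0 : ξ ≠ 0 := by
        intro h
        rw [h, norm_zero] at habs1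
        norm_num at habs1
      have hξm1 : ξ ≠ -1 := hne1 ξ hξ
      by_cases hξ1 : ξ = 1
      · subst hξ1
        simp [Complex.arg_one]
      · have harg0 : ξ.arg ≠ 0 := by
          intro h
          obtain ⟨hre, him⟩ := Complex.arg_eq_zero_iff.mp h
          rcases hreal ξ habs1 him with h' | h'
          · exact hξ1 h'
          · rw [h'] at hre
            norm_num at hre
        have hargpi : ξ.arg ≠ Real.pi := by
          intro h
          obtain ⟨hre, him⟩ := Complex.arg_eq_pi_iff.mp h
          rcases hreal ξ habs1 him with h' | h'
          · rw [h'] at hre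
            norm_num at hre
          · exact hξm1 h'
        rw [Complex.arg_conj, if_neg hargpi]
        rcases lt_or_gt_of_ne harg0 with hlt | hgt
        · rw [if_neg (by linarith), if_pos (by linarith), if_neg hξ0, if_neg hξ1]
        · rw [if_pos hgt, if_neg (by linarith), if_neg hξ0, if_neg hξ1]
  have hfour := countP_four (fun ξ => 0 < ξ.arg) (fun ξ => 0 < ((starRingEnd ℂ) ξ).arg)
      (fun ξ => ξ = 0) (fun ξ => ξ = 1) S hpt
  rw [hPP] at hfour
  -- cardinality and multiplicities
  have hcardS : Multiset.card S = f.natDegree := by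
    rw [hSdef, Polynomial.splits_iff_card_roots.mp hsplits, hFdef,
      Polynomial.natDegree_map_eq_of_injective hinj]
  have hc0 : S.countP (fun ξ => ξ = 0) = rootMultiplicity 0 f := by
    have h1' : S.countP (fun ξ => ξ = 0) = S.count 0 := by
      rw [Multiset.count_eq_card_filter_eq, Multiset.countP_eq_card_filter,
        Multiset.filter_congr (fun x _ => by exact eq_comm)]
    rw [h1', hSdef, Polynomial.count_roots, hFdef,
      show (0 : ℂ) = algebraMap ℝ ℂ 0 by simp]
    exact (Polynomial.eq_rootMultiplicity_map hinj 0).symm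
  have hc1 : S.countP (fun ξ => ξ = 1) = rootMultiplicity 1 f := by
    have h1' : S.countP (fun ξ => ξ = 1) = S.count 1 := by
      rw [Multiset.count_eq_card_filter_eq, Multiset.countP_eq_card_filter,
        Multiset.filter_congr (fun x _ => by exact eq_comm)]
    rw [h1', hSdef, Polynomial.count_roots, hFdef,
      show (1 : ℂ) = algebraMap ℝ ℂ 1 by simp]
    exact (Polynomial.eq_rootMultiplicity_map hinj 1).symm
  have hr : S.countP (fun ξ => ξ ≠ 0) + S.countP (fun ξ => ξ = 0) = Multiset.card S := by
    have h := congrArg Multiset.card (Multiset.filter_add_not (fun ξ => ξ = 0) S)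
    rw [Multiset.card_add] at h
    rw [Multiset.countP_eq_card_filter, Multiset.countP_eq_card_filter]
    simp only [ne_eq]
    omega
  -- final arithmetic
  set P := S.countP (fun ξ => 0 < ξ.arg) with hPdef
  set r := S.countP (fun ξ => ξ ≠ 0) with hrdef
  have e2 : (r : ℚ) + (rootMultiplicity 0 f : ℚ) = (f.natDegree : ℚ) := by
    rw [← hc0, ← hcardS]
    exact_mod_cast hr
  have e3 : (P : ℚ) + (P : ℚ) + (rootMultiplicity 0 f : ℚ) + (rootMultiplicity 1 f : ℚ)
      = (f.natDegree : ℚ) := by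
    rw [← hc0, ← hc1, ← hcardS]
    exact_mod_cast hfour
  simp only [piFn]
  rw [hsum]
  subst hm
  push_cast
  linear_combination (m : ℚ) * e2 + e3 / 2
end

section
/- Let d ≥ 2 and κ ≥ 1 be coprime integers, let i, j ≥ 0 be integers, and write κ(j−i) = ad + b with a an integer and 0 ≤ b < d. Then: if i − j > 0, then π_{κ/d}(q^{i+d} − q^j) − π_{κ/d}(q^i − q^j) = 2κ; if −d < i − j < 0, then this difference equals 2(κ − a) − 1; and if i − j < −d, then this difference equals 0. -/
open Polynomial

open Complex in
private lemma count_exp_eq (T θ : ℝ) (hθ0 : 0 < θ) (hθ2 : θ ≤ 2 * Real.pi) :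
    Nat.card {l : ℝ // 0 < l ∧ l ≤ T ∧ Complex.exp ((l : ℂ) * Complex.I)
        = Complex.exp ((θ : ℂ) * Complex.I)}
      = Nat.card {m : ℕ // θ + 2 * Real.pi * m ≤ T} := by
  have hπ := Real.pi_pos
  symm
  apply Nat.card_congr
  refine Equiv.ofBijective (fun x => ⟨θ + 2 * Real.pi * x.1, by positivity, x.2, ?_⟩) ⟨?_, ?_⟩
  · have h : ((θ + 2 * Real.pi * (x.1 : ℝ) : ℝ) : ℂ) * Complex.I
        = (θ : ℂ) * Complex.I + ((x.1 : ℤ) : ℂ) * (2 * (Real.pi : ℂ) * Complex.I) := by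
      push_cast; ring
    rw [h, Complex.exp_add, Complex.exp_int_mul_two_pi_mul_I, mul_one]
  · rintro ⟨m, hm⟩ ⟨m', hm'⟩ h
    have h1 : θ + 2 * Real.pi * m = θ + 2 * Real.pi * m' := congrArg Subtype.val h
    have : (m : ℝ) = m' := by
      exact mul_left_cancel₀ (by positivity) (add_left_cancel h1)
    exact Subtype.ext (by exact_mod_cast this)
  · rintro ⟨l, hl0, hlT, hexp⟩
    obtain ⟨n, hn⟩ := Complex.exp_eq_exp_iff_exists_int.mp hexp
    have h2 : ((θ + 2 * Real.pi * n : ℝ) : ℂ) * Complex.I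
        = (θ : ℂ) * Complex.I + n * (2 * (Real.pi : ℂ) * Complex.I) := by push_cast; ring
    have hl : l = θ + 2 * Real.pi * n :=
      Complex.ofReal_inj.mp (mul_right_cancel₀ Complex.I_ne_zero (hn.trans h2.symm))
    have hn0 : 0 ≤ n := by
      by_contra hneg
      push_neg at hneg
      have hn1 : n ≤ -1 := by omega
      have : (n : ℝ) ≤ -1 := by exact_mod_cast hn1
      nlinarith
    refine ⟨⟨n.toNat, ?_⟩, Subtype.ext ?_⟩
    · have : ((n.toNat : ℕ) : ℝ) = (n : ℝ) := by exact_mod_cast Int.toNat_of_nonneg hn0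
      rw [this, ← hl]; exact hlT
    · have : ((n.toNat : ℕ) : ℝ) = (n : ℝ) := by exact_mod_cast Int.toNat_of_nonneg hn0
      simp only [this, ← hl]

private lemma sum_card_eq (N M : ℕ) (hN : 0 < N) :
    ∑ k ∈ Finset.range N, Nat.card {m : ℕ // (k + 1) + m * N ≤ M} = M := by
  have key : ∀ k ∈ Finset.range N, Nat.card {m : ℕ // (k + 1) + m * N ≤ M}
      = ((Finset.range M).filter fun p => p % N = k).card := by
    intro k hk
    rw [Finset.mem_range] at hk
    rw [← Nat.card_eq_finsetCard]
    apply Nat.card_congr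
    have mem_iff : ∀ p, p ∈ (Finset.range M).filter (fun p => p % N = k) ↔ p < M ∧ p % N = k := by
      intro p; simp [Finset.mem_filter, Finset.mem_range]
    have inv_eq : ∀ p : {x // x ∈ (Finset.range M).filter fun p => p % N = k},
        k + p.1 / N * N = p.1 := by
      intro p
      have hp := (mem_iff p.1).mp p.2
      conv_rhs => rw [← Nat.mod_add_div p.1 N]
      rw [hp.2, Nat.mul_comm]
    refine ⟨fun x => ⟨k + x.1 * N, (mem_iff _).mpr ⟨by omega, ?_⟩⟩,
            fun p => ⟨p.1 / N, ?_⟩, fun x => Subtype.ext ?_, fun p => Subtype.ext ?_⟩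
    · rw [Nat.add_mul_mod_self_right, Nat.mod_eq_of_lt hk]
    · have hp := (mem_iff p.1).mp p.2
      have e := inv_eq p
      calc (k + 1) + p.1 / N * N = (k + p.1 / N * N) + 1 := by ring
        _ = p.1 + 1 := by rw [e]
        _ ≤ M := hp.1
    · show (k + x.1 * N) / N = x.1
      rw [Nat.add_mul_div_right _ _ hN, Nat.div_eq_of_lt hk, Nat.zero_add]
    · exact inv_eq p
  rw [Finset.sum_congr rfl key,
    ← Finset.card_eq_sum_card_fiberwise (fun p _ => Finset.mem_range.mpr (Nat.mod_lt _ hN)),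
    Finset.card_range]

private lemma argCount_eq' (κ d n N : ℕ) (hd : 0 < d) (hN : 0 < N) :
    argCount ((κ : ℝ) / (d : ℝ)) (X ^ (n + N) - X ^ n : Polynomial ℝ) = N * κ / d := by
  classical
  have hπ := Real.pi_pos
  set t : ℝ := (κ : ℝ) / d with ht
  set g : ℂ → ℕ := fun ξ =>
    Nat.card {l : ℝ // 0 < l ∧ l ≤ 2 * Real.pi * t ∧ Complex.exp ((l : ℂ) * Complex.I) = ξ}
    with hg
  have hmap : ((X ^ (n + N) - X ^ n : Polynomial ℝ).map (algebraMap ℝ ℂ))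
      = X ^ (n + N) - X ^ n := by
    simp [Polynomial.map_sub, Polynomial.map_pow]
  have hfac : (X ^ (n + N) - X ^ n : Polynomial ℂ) = X ^ n * (X ^ N - 1) := by ring
  have hXn : (X ^ n : Polynomial ℂ) ≠ 0 := pow_ne_zero _ X_ne_zero
  have hXN : (X ^ N - 1 : Polynomial ℂ) ≠ 0 := fun h => by
    have := congrArg (eval 0) h
    simp [zero_pow hN.ne'] at this
  have hζ := Complex.isPrimitiveRoot_exp N hN.ne'
  set ζ : ℂ := Complex.exp (2 * Real.pi * Complex.I / N) with hζdef
  have hroots : (X ^ N - 1 : Polynomial ℂ).roots = (Multiset.range N).map (ζ ^ ·) := by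
    have h1 := hζ.nthRoots_eq (one_pow N)
    simp only [mul_one] at h1
    rw [show (X ^ N - 1 : Polynomial ℂ) = X ^ N - C 1 by rw [C_1], ← nthRoots, h1]
  show ((((X ^ (n + N) - X ^ n : Polynomial ℝ).map (algebraMap ℝ ℂ)).roots).map g).sum
      = N * κ / d
  rw [hmap, hfac, roots_mul (hfac ▸ mul_ne_zero hXn hXN), roots_pow, roots_X, hroots,
    Multiset.map_add, Multiset.sum_add]
  have hzero : ((n • ({0} : Multiset ℂ)).map g).sum = 0 := by
    have hempty : IsEmpty {l : ℝ // 0 < l ∧ l ≤ 2 * Real.pi * t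
        ∧ Complex.exp ((l : ℂ) * Complex.I) = 0} :=
      ⟨fun x => Complex.exp_ne_zero _ x.2.2.2⟩
    have hg0 : g 0 = 0 := @Nat.card_of_isEmpty _ hempty
    rw [Multiset.nsmul_singleton, Multiset.map_replicate, hg0, Multiset.sum_replicate, smul_zero]
  rw [hzero, Nat.zero_add, Multiset.map_map]
  have hsum : ((Multiset.range N).map (g ∘ (ζ ^ ·))).sum
      = ∑ k ∈ Finset.range N, g (ζ ^ k) := by
    rw [Finset.sum]
    rfl
  rw [hsum]
  have hshift : ∑ k ∈ Finset.range N, g (ζ ^ k) = ∑ k ∈ Finset.range N, g (ζ ^ (k + 1)) := by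
    have h1 := Finset.sum_range_succ (fun k => g (ζ ^ k)) N
    have h2 := Finset.sum_range_succ' (fun k => g (ζ ^ k)) N
    have h3 : ζ ^ N = ζ ^ 0 := by rw [pow_zero, hζ.pow_eq_one]
    rw [h1] at h2
    simp only [h3] at h2
    omega
  rw [hshift]
  have hterm : ∀ k ∈ Finset.range N, g (ζ ^ (k + 1))
      = Nat.card {m : ℕ // (k + 1) + m * N ≤ N * κ / d} := by
    intro k hk
    rw [Finset.mem_range] at hk
    have hNR : (0 : ℝ) < N := by exact_mod_cast hN
    have hdR : (0 : ℝ) < d := by exact_mod_cast hd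
    set θ : ℝ := 2 * Real.pi * (k + 1) / N with hθ
    have hζk : ζ ^ (k + 1) = Complex.exp ((θ : ℂ) * Complex.I) := by
      rw [hζdef, ← Complex.exp_nat_mul]
      congr 1
      push_cast [hθ]
      field_simp
    have hθ0 : 0 < θ := by positivity
    have hθ2 : θ ≤ 2 * Real.pi := by
      rw [hθ, div_le_iff₀ hNR]
      have : (k : ℝ) + 1 ≤ N := by exact_mod_cast hk
      nlinarith
    rw [hg]
    simp only [hζk]
    rw [count_exp_eq (2 * Real.pi * t) θ hθ0 hθ2]
    apply Nat.card_congr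
    apply Equiv.subtypeEquivRight
    intro m
    have hM : (N * κ : ℕ) / d = ⌊((N * κ : ℕ) : ℝ) / (d : ℕ)⌋₊ := by
      rw [Nat.floor_div_natCast, Nat.floor_natCast]
    have hiff1 : θ + 2 * Real.pi * m ≤ 2 * Real.pi * t
        ↔ ((k + 1 : ℝ) + m * N) ≤ (N : ℝ) * κ / d := by
      rw [show θ + 2 * Real.pi * m = (2 * Real.pi / N) * ((k + 1 : ℝ) + m * N) by
          rw [hθ]; field_simp,
        show 2 * Real.pi * t = (2 * Real.pi / N) * ((N : ℝ) * κ / d) by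
          rw [ht]; field_simp,
        mul_le_mul_iff_right₀ (by positivity)]
    rw [hiff1, hM]
    rw [Nat.le_floor_iff (by positivity)]
    constructor
    · intro h; push_cast; convert h using 2 <;> push_cast <;> ring
    · intro h; push_cast at h; convert h using 2 <;> push_cast <;> ring
  rw [Finset.sum_congr rfl hterm, sum_card_eq N (N * κ / d) hN]

private lemma hXn_ne (n : ℕ) : (X ^ n : Polynomial ℝ) ≠ 0 := pow_ne_zero _ X_ne_zero

private lemma hXN_ne (N : ℕ) (hN : 0 < N) : (X ^ N - 1 : Polynomial ℝ) ≠ 0 := fun h => by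
  have := congrArg (eval 0) h
  simp [zero_pow hN.ne'] at this

private lemma rm0_eq (n N : ℕ) (hN : 0 < N) :
    rootMultiplicity 0 (X ^ (n + N) - X ^ n : Polynomial ℝ) = n := by
  rw [show (X ^ (n + N) - X ^ n : Polynomial ℝ) = X ^ n * (X ^ N - 1) by ring,
    rootMultiplicity_mul (mul_ne_zero (hXn_ne n) (hXN_ne N hN)),
    show (X ^ n : Polynomial ℝ) = (X - C 0) ^ n by rw [C_0, sub_zero],
    rootMultiplicity_X_sub_C_pow,
    rootMultiplicity_eq_zero (by simp [IsRoot, zero_pow hN.ne']), Nat.add_zero]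

private lemma rm1_eq (n N : ℕ) (hN : 0 < N) :
    rootMultiplicity 1 (X ^ (n + N) - X ^ n : Polynomial ℝ) = 1 := by
  rw [show (X ^ (n + N) - X ^ n : Polynomial ℝ) = X ^ n * (X ^ N - 1) by ring,
    rootMultiplicity_mul (mul_ne_zero (hXn_ne n) (hXN_ne N hN)),
    rootMultiplicity_eq_zero (by simp [IsRoot])]
  have hsep : (X ^ N - 1 : Polynomial ℝ).Separable := by
    have := separable_X_pow_sub_C (1 : ℝ) (by exact_mod_cast hN.ne') one_ne_zero
    rwa [C_1] at this
  have hle := rootMultiplicity_le_one_of_separable hsep (1 : ℝ)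
  have hpos : 0 < rootMultiplicity 1 (X ^ N - 1 : Polynomial ℝ) :=
    (rootMultiplicity_pos (hXN_ne N hN)).mpr (by simp [IsRoot])
  omega

private lemma ndeg_eq (n N : ℕ) (hN : 0 < N) :
    (X ^ (n + N) - X ^ n : Polynomial ℝ).natDegree = n + N := by
  rw [natDegree_sub_eq_left_of_natDegree_lt (by simp [natDegree_X_pow]; omega), natDegree_X_pow]

private lemma piFn_neg' (κ d : ℕ) (f : Polynomial ℝ) : piFn κ d (-f) = piFn κ d f := by
  have hrm : ∀ a : ℝ, rootMultiplicity a (-f) = rootMultiplicity a f := by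
    intro a
    classical
    rw [← count_roots, ← count_roots, roots_neg]
  have harg : ∀ t : ℝ, argCount t (-f) = argCount t f := by
    intro t
    unfold argCount
    rw [Polynomial.map_neg, roots_neg]
  rw [piFn, piFn, hrm, hrm, harg, natDegree_neg]

private lemma piFn_eq (κ d n N : ℕ) (hd : 0 < d) (hN : 0 < N) :
    piFn κ d (X ^ (n + N) - X ^ n) =
      ((n : ℚ) + ((n : ℚ) + N)) * κ / d + ((N * κ / d : ℕ) : ℚ) + 1 / 2 := by
  rw [piFn, rm0_eq n N hN, rm1_eq n N hN, ndeg_eq n N hN, argCount_eq' κ d n N hd hN]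
  push_cast
  ring

/-- Proposition 8.2, first equation: writing `κ(j−i) = ad + b` with `0 ≤ b < d`,
the difference `π_{κ/d}(q^{i+d} − q^j) − π_{κ/d}(q^i − q^j)` equals `2κ` if `i − j > 0`,
equals `2(κ − a) − 1` if `−d < i − j < 0`, and equals `0` if `i − j < −d`. -/
theorem piFn_shift_sub (κ d : ℕ) (hd : 2 ≤ d) (hκ : 1 ≤ κ) (hcop : Nat.Coprime κ d)
    (i j : ℕ) (a b : ℤ) (hab : (κ : ℤ) * ((j : ℤ) - (i : ℤ)) = a * (d : ℤ) + b)
    (hb0 : 0 ≤ b) (hbd : b < (d : ℤ)) :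
    (0 < (i : ℤ) - (j : ℤ) →
      piFn κ d (X ^ (i + d) - X ^ j) - piFn κ d (X ^ i - X ^ j) = 2 * (κ : ℚ)) ∧
    (-(d : ℤ) < (i : ℤ) - (j : ℤ) → (i : ℤ) - (j : ℤ) < 0 →
      piFn κ d (X ^ (i + d) - X ^ j) - piFn κ d (X ^ i - X ^ j)
        = 2 * ((κ : ℚ) - (a : ℚ)) - 1) ∧
    ((i : ℤ) - (j : ℤ) < -(d : ℤ) →
      piFn κ d (X ^ (i + d) - X ^ j) - piFn κ d (X ^ i - X ^ j) = 0) := by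
  have hd0 : 0 < d := by omega
  have hdq : (d : ℚ) ≠ 0 := by exact_mod_cast hd0.ne'
  refine ⟨fun h => ?_, fun h1 h2 => ?_, fun h => ?_⟩
  · -- Case 1 : j < i
    obtain ⟨s, hs, rfl⟩ : ∃ s, 0 < s ∧ i = j + s := ⟨i - j, by omega, by omega⟩
    rw [show j + s + d = j + (s + d) by omega,
      piFn_eq κ d j (s + d) hd0 (by omega), piFn_eq κ d j s hd0 hs]
    have hnat : (s + d) * κ / d = s * κ / d + κ := by
      rw [add_mul, mul_comm d κ, Nat.add_mul_div_right _ _ hd0]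
    rw [hnat]
    push_cast
    field_simp
    ring
  · -- Case 2 : i < j < i + d
    obtain ⟨s, hs0, hsd, rfl⟩ : ∃ s, 0 < s ∧ s < d ∧ j = i + s :=
      ⟨j - i, by omega, by omega, by omega⟩
    have habs : (κ : ℤ) * (s : ℤ) = a * d + b := by
      push_cast at hab; linear_combination hab
    have hκ1 : (1 : ℤ) ≤ κ := by exact_mod_cast hκ
    have hs1 : (1 : ℤ) ≤ s := by exact_mod_cast hs0
    have hsd' : (s : ℤ) ≤ (d : ℤ) - 1 := by omega
    have hκs : (1 : ℤ) ≤ κ * s := by nlinarith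
    have ha0 : 0 ≤ a := by
      by_contra hneg
      push_neg at hneg
      have h1 : a * d ≤ -1 * d := mul_le_mul_of_nonneg_right (by omega) (by positivity)
      linarith
    have haκ : a < κ := by
      by_contra hge
      push_neg at hge
      have h1 : (κ : ℤ) * d ≤ a * d := mul_le_mul_of_nonneg_right hge (by positivity)
      have h2 : (κ : ℤ) * s ≤ κ * (d - 1) := mul_le_mul_of_nonneg_left hsd' (by linarith)
      nlinarith
    have hb1 : 1 ≤ b := by
      by_contra hble
      push_neg at hble
      have hbz : b = 0 := le_antisymm (by omega) hb0
      have hdvd : (d : ℤ) ∣ ((κ * s : ℕ) : ℤ) := ⟨a, by push_cast; linear_combination habs + hbz⟩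
      have hdvdn : d ∣ κ * s := by exact_mod_cast hdvd
      have : d ∣ s := (hcop.symm).dvd_of_dvd_mul_left hdvdn
      have := Nat.le_of_dvd hs0 this
      omega
    -- natural number versions
    set A := a.toNat with hAdef
    set B := b.toNat with hBdef
    have hA : (A : ℤ) = a := Int.toNat_of_nonneg ha0
    have hB : (B : ℤ) = b := Int.toNat_of_nonneg hb0
    have hAκ : A < κ := by omega
    have hB1 : 1 ≤ B := by omega
    have hBd : B < d := by omega
    have hnat : s * κ = A * d + B := by
      have : ((s * κ : ℕ) : ℤ) = ((A * d + B : ℕ) : ℤ) := by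
        push_cast; rw [hA, hB]; linear_combination habs
      exact_mod_cast this
    have hM0 : s * κ / d = A := by
      rw [hnat, Nat.add_comm, Nat.add_mul_div_right _ _ hd0, Nat.div_eq_of_lt hBd, Nat.zero_add]
    have hknat : (d - s) * κ = (κ - A - 1) * d + (d - B) := by
      zify [hsd.le, hBd.le, show A + 1 ≤ κ by omega, show A ≤ κ by omega, show 1 ≤ κ - A by omega]
      rw [hA, hB]
      linear_combination -habs
    have hM1 : (d - s) * κ / d = κ - A - 1 := by
      rw [hknat, Nat.add_comm, Nat.add_mul_div_right _ _ hd0,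
        Nat.div_eq_of_lt (by omega), Nat.zero_add]
    rw [show (X ^ i - X ^ (i + s) : Polynomial ℝ) = -(X ^ (i + s) - X ^ i) by ring, piFn_neg',
      show i + d = (i + s) + (d - s) by omega,
      piFn_eq κ d (i + s) (d - s) hd0 (by omega), piFn_eq κ d i s hd0 hs0]
    rw [hM0, hM1]
    have hc1 : ((d - s : ℕ) : ℚ) = (d : ℚ) - s := by
      rw [Nat.cast_sub hsd.le]
    have hc2 : ((κ - A - 1 : ℕ) : ℚ) = (κ : ℚ) - (a : ℚ) - 1 := by
      rw [Nat.cast_sub (by omega), Nat.cast_sub (by omega)]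
      norm_num
      exact_mod_cast congrArg (Int.cast : ℤ → ℚ) hA
    have hc3 : ((A : ℕ) : ℚ) = (a : ℚ) := by exact_mod_cast congrArg (Int.cast : ℤ → ℚ) hA
    rw [hc1, hc2, hc3]
    push_cast
    field_simp
    ring
  · -- Case 3 : i + d < j
    obtain ⟨s, hds, rfl⟩ : ∃ s, d < s ∧ j = i + s := ⟨j - i, by omega, by omega⟩
    have e1 : piFn κ d (X ^ (i + d) - X ^ (i + s) : Polynomial ℝ)
        = piFn κ d (X ^ ((i + d) + (s - d)) - X ^ (i + d)) := by
      rw [show (i + d) + (s - d) = i + s by omega,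
        show (X ^ (i + d) - X ^ (i + s) : Polynomial ℝ) = -(X ^ (i + s) - X ^ (i + d)) by ring,
        piFn_neg']
    have e2 : piFn κ d (X ^ i - X ^ (i + s) : Polynomial ℝ)
        = piFn κ d (X ^ (i + s) - X ^ i) := by
      rw [show (X ^ i - X ^ (i + s) : Polynomial ℝ) = -(X ^ (i + s) - X ^ i) by ring, piFn_neg']
    rw [e1, e2, piFn_eq κ d (i + d) (s - d) hd0 (by omega), piFn_eq κ d i s hd0 (by omega)]
    have hsk : s * κ / d = (s - d) * κ / d + κ := by
      have hsknat : s * κ = (s - d) * κ + κ * d := by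
        conv_lhs => rw [show s = (s - d) + d by omega]
        rw [add_mul, mul_comm d κ]
      rw [hsknat, Nat.add_mul_div_right _ _ hd0]
    rw [hsk]
    have hc1 : ((s - d : ℕ) : ℚ) = (s : ℚ) - d := by rw [Nat.cast_sub hds.le]
    rw [hc1]
    push_cast
    field_simp
    ring
end
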